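/- arXiv:1206.5572 — 4 statements merged into one kernel-verified Lean document; each statement's English description precedes it below -/
import Mathlib

section
/- Let S ⊆ ℝ^d be a closed nonempty set and x ∈ ∂S. The following three properties are equivalent: (i) S is wedged at x, i.e. N_S^C(x) ∩ (−N_S^C(x)) = {0}; (ii) the Clarke tangent cone T_S^C(x) has nonempty interior; (iii) there exist v ∈ ℝ^d and ε > 0 such that y + W(v,ε) ⊆ S for every y ∈ (x + εB_d) ∩ S. -/
open Set Metric Filter Topology MeasureTheory
open scoped Pointwise

noncomputable section

/-- Euclidean space `ℝ^d`. -/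
abbrev Euc (d : ℕ) := EuclideanSpace ℝ (Fin d)


/-- Real inner product on `ℝ^d`. -/
def rinner {d : ℕ} (x y : Euc d) : ℝ := inner ℝ x y

/-- Limiting proximal normal directions to `S` at `x`. -/
def limProxDirs {d : ℕ} (S : Set (Euc d)) (x : Euc d) : Set (Euc d) :=
  {v | ‖v‖ = 1 ∧ ∃ y w : ℕ → Euc d,
    (∀ n, y n ∈ S) ∧ Tendsto y atTop (𝓝 x) ∧
    (∀ n, w n ≠ 0) ∧ Tendsto w atTop (𝓝 (0 : Euc d)) ∧
    (∀ n, infDist (y n + w n) S = ‖w n‖) ∧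
    Tendsto (fun n => (‖w n‖)⁻¹ • w n) atTop (𝓝 v)}

/-- Clarke (proximal) normal cone to `S` at `x`. -/
def clarkeNormalCone {d : ℕ} (S : Set (Euc d)) (x : Euc d) : Set (Euc d) :=
  {p | ∃ lam : ℝ, 0 ≤ lam ∧
    ∃ ξ ∈ closure (convexHull ℝ ({0} ∪ limProxDirs S x)), p = lam • ξ}

/-- `S` is wedged at `x` if its Clarke normal cone at `x` is pointed. -/
def WedgedAt {d : ℕ} (S : Set (Euc d)) (x : Euc d) : Prop :=
  clarkeNormalCone S x ∩ (-(clarkeNormalCone S x)) = {0}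

/-- Clarke tangent cone: the polar cone of the Clarke normal cone. -/
def clarkeTangentCone {d : ℕ} (S : Set (Euc d)) (x : Euc d) : Set (Euc d) :=
  {v | ∀ p ∈ clarkeNormalCone S x, rinner p v ≤ 0}

/-- Bouligand tangent cone. -/
def bouligandCone {d : ℕ} (S : Set (Euc d)) (x : Euc d) : Set (Euc d) :=
  {v | Filter.liminf (fun t : ℝ => infDist (x + t • v) S / t) (𝓝[>] (0:ℝ)) = 0}

/-- The wedge `W(v, ε) = {s • w : w ∈ v + εB, s ∈ [0, ε]}`. -/
def wedge {d : ℕ} (v : Euc d) (ε : ℝ) : Set (Euc d) :=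
  {p | ∃ w ∈ ball v ε, ∃ s ∈ Icc (0:ℝ) ε, p = s • w}

/-- Signed distance function of a closed set. -/
def signedDistFn {d : ℕ} (Z : Set (Euc d)) (x : Euc d) : ℝ :=
  infDist x Z - infDist x (closure Zᶜ)

/-- `r`-inner approximation `S_r = {x : dist(x, ℝ^d ∖ S) ≥ r}`. -/
def innerApprox {d : ℕ} (S : Set (Euc d)) (r : ℝ) : Set (Euc d) :=
  {x | r ≤ infDist x Sᶜ}

/-- `Q(S,r) = S ∖ interior S_r`. -/
def crown {d : ℕ} (S : Set (Euc d)) (r : ℝ) : Set (Euc d) :=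
  S \ interior (innerApprox S r)

/-- `r(x) = dist(x, closure(ℝ^d ∖ S))`. -/
def bdist {d : ℕ} (S : Set (Euc d)) (x : Euc d) : ℝ := infDist x (closure Sᶜ)

/-- (F1): continuity on `ℝ^d × U` and uniform Lipschitz continuity in the state. -/
def CondF1 {d m : ℕ} (f : Euc d → Euc m → Euc d) (Uset : Set (Euc m)) : Prop :=
  ContinuousOn (fun p : Euc d × Euc m => f p.1 p.2) (univ ×ˢ Uset) ∧
  ∃ Lf : ℝ, 0 ≤ Lf ∧ ∀ x y : Euc d, ∀ u ∈ Uset, ‖f x u - f y u‖ ≤ Lf * ‖x - y‖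

/-- (F2): sublinear growth. -/
def CondF2 {d m : ℕ} (f : Euc d → Euc m → Euc d) (Uset : Set (Euc m)) : Prop :=
  ∃ Cf : ℝ, 0 ≤ Cf ∧ ∀ (x : Euc d), ∀ u ∈ Uset, ‖f x u‖ ≤ Cf * (1 + ‖x‖)

/-- (F3): convexity of velocity sets. -/
def CondF3 {d m : ℕ} (f : Euc d → Euc m → Euc d) (Uset : Set (Euc m)) : Prop :=
  ∀ x : Euc d, Convex ℝ ((fun u => f x u) '' Uset)

/-- (S1): `S` compact and wedged at every boundary point. -/
def CondS1 {d : ℕ} (S : Set (Euc d)) : Prop :=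
  IsCompact S ∧ ∀ x ∈ frontier S, WedgedAt S x

/-- (S2): strict inwardness. -/
def CondS2 {d m : ℕ} (f : Euc d → Euc m → Euc d) (Uset : Set (Euc m)) (S : Set (Euc d)) : Prop :=
  ∀ x ∈ frontier S, ∀ p ∈ clarkeNormalCone S x, p ≠ 0 → ∃ u ∈ Uset, rinner (f x u) p < 0

/-- A measurable open-loop control with values in `Uset` on `[0,T]`. -/
def IsAdmControl {m : ℕ} (Uset : Set (Euc m)) (T : ℝ) (u : ℝ → Euc m) : Prop :=
  Measurable u ∧ ∀ t ∈ Icc (0:ℝ) T, u t ∈ Uset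

/-- Carathéodory solution of `ẋ = f(x,u(t))` on `[0,T]` with `x(0) = x0`. -/
def IsOLSol {d m : ℕ} (f : Euc d → Euc m → Euc d) (u : ℝ → Euc m) (T : ℝ)
    (x0 : Euc d) (x : ℝ → Euc d) : Prop :=
  ContinuousOn x (Icc 0 T) ∧ x 0 = x0 ∧
  IntegrableOn (fun s => f (x s) (u s)) (Icc 0 T) ∧
  ∀ t ∈ Icc (0:ℝ) T, x t = x0 + ∫ s in (0:ℝ)..t, f (x s) (u s)

/-- Open loop `S`-constrained controllability to `Sig`. -/
def OLConstrainedControllable {d m : ℕ} (f : Euc d → Euc m → Euc d) (Uset : Set (Euc m))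
    (S Sig : Set (Euc d)) : Prop :=
  ∀ x0 ∈ S, ∃ T : ℝ, 0 ≤ T ∧ ∃ u : ℝ → Euc m, IsAdmControl Uset T u ∧
    ∃ x : ℝ → Euc d, IsOLSol f u T x0 x ∧ (∀ t ∈ Icc (0:ℝ) T, x t ∈ S) ∧ x T ∈ Sig

/-- A finite patchy feedback `(Ω_1,…,Ω_N; u_1,…,u_N)` for `f` on the open set `D`. -/
structure IsPatchyFeedback {d m : ℕ} (f : Euc d → Euc m → Euc d) (Uset : Set (Euc m))
    (D : Set (Euc d)) {N : ℕ} (Ω : Fin N → Set (Euc d)) (uv : Fin N → Euc m) : Prop where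
  patch_open : ∀ i, IsOpen (Ω i)
  ctrl_mem : ∀ i, uv i ∈ Uset
  cover : D = ⋃ i, Ω i
  inward : ∀ i : Fin N, ∀ x ∈ frontier (Ω i) \ ⋃ j ∈ Ioi i, Ω j,
    f x (uv i) ∈ interior (bouligandCone (Ω i) x)

/-- `U` is the feedback law associated with the patches `(Ω_i, u_i)`:
`U(x) = u_{i*(x)}` with `i*(x) = max {i : x ∈ Ω_i}`. -/
def IsFeedbackLaw {d m N : ℕ} (Ω : Fin N → Set (Euc d)) (uv : Fin N → Euc m)
    (U : Euc d → Euc m) : Prop :=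
  ∀ i : Fin N, ∀ x ∈ Ω i \ ⋃ j ∈ Ioi i, Ω j, U x = uv i

/-- Carathéodory solution of the closed-loop system `ẋ = f(x, U(x))` on `[0,T]`,
with values in `D`, starting at `x0`. -/
def IsCLSol {d m : ℕ} (f : Euc d → Euc m → Euc d) (U : Euc d → Euc m) (D : Set (Euc d))
    (T : ℝ) (x0 : Euc d) (x : ℝ → Euc d) : Prop :=
  ContinuousOn x (Icc 0 T) ∧ x 0 = x0 ∧ (∀ s ∈ Icc (0:ℝ) T, x s ∈ D) ∧
  IntegrableOn (fun s => f (x s) (U (x s))) (Icc 0 T) ∧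
  ∀ t ∈ Icc (0:ℝ) T, x t = x0 + ∫ s in (0:ℝ)..t, f (x s) (U (x s))

/-- A closed-loop solution that cannot be extended to a strictly larger time interval. -/
def MaximalCLSol {d m : ℕ} (f : Euc d → Euc m → Euc d) (U : Euc d → Euc m) (D : Set (Euc d))
    (T : ℝ) (x0 : Euc d) (x : ℝ → Euc d) : Prop :=
  IsCLSol f U D T x0 x ∧
  ¬ ∃ T' : ℝ, T < T' ∧ ∃ x' : ℝ → Euc d, IsCLSol f U D T' x0 x' ∧ ∀ t ∈ Icc (0:ℝ) T, x' t = x t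

/-- Carathéodory solution of the autonomous equation `ẋ = g(x)` on `[a,b]` with values in `Ω`. -/
def IsPVFSol {d : ℕ} (g : Euc d → Euc d) (Ω : Set (Euc d)) (a b : ℝ) (γ : ℝ → Euc d) : Prop :=
  ContinuousOn γ (Icc a b) ∧ (∀ t ∈ Icc a b, γ t ∈ Ω) ∧
  IntegrableOn (fun s => g (γ s)) (Icc a b) ∧
  ∀ t ∈ Icc a b, γ t = γ a + ∫ s in a..t, g (γ s)

/-- A patchy vector field `g` on the open set `Ω` with patches `(Ω_α, g_α)`. -/
structure IsPatchyVF {d : ℕ} (A : Type) [LinearOrder A] (Ωa : A → Set (Euc d))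
    (ga : A → Euc d → Euc d) (Ω : Set (Euc d)) (g : Euc d → Euc d) : Prop where
  patch_open : ∀ α, IsOpen (Ωa α)
  cover : Ω = ⋃ α, Ωa α
  locFin : LocallyFinite Ωa
  lip : ∀ α, ∃ K : NNReal, LipschitzWith K (ga α)
  inward : ∀ α, ∀ x ∈ frontier (Ωa α), ga α x ∈ interior (bouligandCone (Ωa α) x)
  sel : ∀ x ∈ Ω, ∃ α, x ∈ Ωa α ∧ (∀ β, x ∈ Ωa β → β ≤ α) ∧ g x = ga α x

namespace WedgedAux

variable {d : ℕ} {S : Set (Euc d)} {x : Euc d}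

lemma zero_mem_hullset : (0 : Euc d) ∈ closure (convexHull ℝ ({0} ∪ limProxDirs S x)) :=
  subset_closure (subset_convexHull ℝ _ (Or.inl rfl))

lemma zero_mem_N : (0 : Euc d) ∈ clarkeNormalCone S x :=
  ⟨0, le_refl 0, 0, zero_mem_hullset, (zero_smul ℝ _).symm⟩

lemma convex_hullset : Convex ℝ (closure (convexHull ℝ ({0} ∪ limProxDirs S x))) :=
  (convex_convexHull ℝ _).closure

lemma smul_mem_N {p : Euc d} (hp : p ∈ clarkeNormalCone S x) {c : ℝ} (hc : 0 ≤ c) :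
    c • p ∈ clarkeNormalCone S x := by
  obtain ⟨a, ha, ξ, hξ, rfl⟩ := hp
  exact ⟨c * a, mul_nonneg hc ha, ξ, hξ, smul_smul c a ξ⟩

lemma add_mem_N {p q : Euc d} (hp : p ∈ clarkeNormalCone S x)
    (hq : q ∈ clarkeNormalCone S x) : p + q ∈ clarkeNormalCone S x := by
  obtain ⟨a, ha, ξ, hξ, rfl⟩ := hp
  obtain ⟨b, hb, η, hη, rfl⟩ := hq
  rcases eq_or_lt_of_le (add_nonneg ha hb) with h0 | hab
  · have ha0 : a = 0 := by linarith [(le_antisymm (by linarith) hb : b = 0)]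
    have hb0 : b = 0 := by linarith
    simpa [ha0, hb0] using zero_mem_N
  · refine ⟨a + b, hab.le, (a / (a+b)) • ξ + (b / (a+b)) • η, ?_, ?_⟩
    · exact convex_hullset hξ hη (div_nonneg ha hab.le) (div_nonneg hb hab.le)
        (by field_simp)
    · rw [smul_add, smul_smul, smul_smul]
      rw [mul_div_cancel₀ _ (ne_of_gt hab), mul_div_cancel₀ _ (ne_of_gt hab)]

lemma neg_smul_mem_neg_N {p : Euc d} (hp : -p ∈ clarkeNormalCone S x) :
    p ∈ -(clarkeNormalCone S x) := by
  simpa [Set.mem_neg] using hp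

/-- (ii) implies (i). -/
lemma wedged_of_interior_nonempty
    (h : (interior (clarkeTangentCone S x)).Nonempty) : WedgedAt S x := by
  obtain ⟨v₀, hv₀⟩ := h
  obtain ⟨δ, hδ, hball⟩ := Metric.mem_nhds_iff.mp (mem_interior_iff_mem_nhds.mp hv₀)
  rw [WedgedAt]
  apply Set.eq_singleton_iff_unique_mem.mpr
  constructor
  · exact ⟨zero_mem_N, by simpa [Set.mem_neg] using (zero_mem_N (S := S) (x := x))⟩
  · rintro p ⟨hp, hpneg⟩
    rw [Set.mem_neg] at hpneg
    have hzero : ∀ u ∈ ball v₀ δ, rinner p u = 0 := by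
      intro u hu
      have hT : u ∈ clarkeTangentCone S x := hball hu
      have h1 : rinner p u ≤ 0 := hT p hp
      have h2 : rinner (-p) u ≤ 0 := hT (-p) hpneg
      have : rinner (-p) u = -(rinner p u) := by simp [rinner, inner_neg_left]
      linarith [this ▸ h2]
    by_contra hp0
    have hpn : (0:ℝ) < ‖p‖ := norm_pos_iff.mpr hp0
    set c : ℝ := δ / (2 * ‖p‖) with hc
    have hcpos : 0 < c := by positivity
    have hmem : v₀ + c • p ∈ ball v₀ δ := by
      rw [mem_ball, dist_eq_norm]
      have h1 : v₀ + c • p - v₀ = c • p := by abel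
      rw [h1, norm_smul, Real.norm_eq_abs, abs_of_nonneg hcpos.le]
      have : c * ‖p‖ = δ / 2 := by rw [hc]; field_simp
      rw [this]; linarith
    have e1 : rinner p (v₀ + c • p) = rinner p v₀ + c * rinner p p := by
      simp only [rinner, inner_add_right, real_inner_smul_right]
    have e2 : rinner p v₀ = 0 := hzero v₀ (mem_ball_self hδ)
    have e3 : rinner p (v₀ + c • p) = 0 := hzero _ hmem
    have e4 : rinner p p = ‖p‖ ^ 2 := real_inner_self_eq_norm_sq p
    rw [e2, e4, zero_add] at e1
    rw [e1] at e3
    have : 0 < c * ‖p‖ ^ 2 := by positivity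
    linarith

lemma limProx_inner_nonpos {v : Euc d} {ε : ℝ} (hε : 0 < ε)
    (hwedge : ∀ y ∈ ball x ε ∩ S, ∀ z ∈ wedge v ε, y + z ∈ S)
    {ξ : Euc d} (hξ : ξ ∈ limProxDirs S x) {w' : Euc d} (hw' : w' ∈ ball v ε) :
    rinner ξ w' ≤ 0 := by
  obtain ⟨hn, y, w, hyS, hyx, hw0, hwlim, hproj, hdir⟩ := hξ
  have hev : ∀ᶠ n in atTop, y n ∈ ball x ε := hyx (ball_mem_nhds x hε)
  have key : ∀ n, y n ∈ ball x ε → rinner (w n) w' ≤ 0 := by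
    intro n hyn
    set A := rinner (w n) w' with hA
    have hstep : ∀ s : ℝ, 0 < s → s ≤ ε → A * s ≤ s ^ 2 * (‖w'‖ ^ 2 / 2) := by
      intro s hs hsε
      have hz : s • w' ∈ wedge v ε := ⟨w', hw', s, ⟨hs.le, hsε⟩, rfl⟩
      have hmem : y n + s • w' ∈ S := hwedge (y n) ⟨hyn, hyS n⟩ _ hz
      have hd : ‖w n‖ ≤ ‖w n - s • w'‖ := by
        have h1 : infDist (y n + w n) S ≤ dist (y n + w n) (y n + s • w') :=
          infDist_le_dist_of_mem hmem
        rw [hproj n, dist_eq_norm] at h1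
        have h2 : y n + w n - (y n + s • w') = w n - s • w' := by abel
        rwa [h2] at h1
      have hsq : ‖w n‖ ^ 2 ≤ ‖w n - s • w'‖ ^ 2 :=
        pow_le_pow_left₀ (norm_nonneg _) hd 2
      have hexp : ‖w n - s • w'‖ ^ 2
          = ‖w n‖ ^ 2 - 2 * (s * A) + s ^ 2 * ‖w'‖ ^ 2 := by
        rw [norm_sub_sq_real, real_inner_smul_right, norm_smul, mul_pow]
        simp only [Real.norm_eq_abs, sq_abs, hA, rinner]
        try ring
      rw [hexp] at hsq
      nlinarith
    by_contra hApos
    push_neg at hApos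
    set s₀ : ℝ := min ε (A / (‖w'‖ ^ 2 + 1)) with hs₀def
    have hC : (0:ℝ) < ‖w'‖ ^ 2 + 1 := by positivity
    have hs₀pos : 0 < s₀ := lt_min hε (div_pos hApos hC)
    have hs₀ε : s₀ ≤ ε := min_le_left _ _
    have hs₀A : s₀ * (‖w'‖ ^ 2 + 1) ≤ A := by
      have := min_le_right ε (A / (‖w'‖ ^ 2 + 1))
      calc s₀ * (‖w'‖ ^ 2 + 1) ≤ (A / (‖w'‖ ^ 2 + 1)) * (‖w'‖ ^ 2 + 1) := by
            apply mul_le_mul_of_nonneg_right this hC.le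
        _ = A := by field_simp
    have := hstep s₀ hs₀pos hs₀ε
    nlinarith
  have hterm : ∀ᶠ n in atTop, rinner ((‖w n‖)⁻¹ • w n) w' ≤ 0 := by
    filter_upwards [hev] with n hyn
    have : rinner ((‖w n‖)⁻¹ • w n) w' = (‖w n‖)⁻¹ * rinner (w n) w' :=
      real_inner_smul_left _ _ _
    rw [this]
    exact mul_nonpos_of_nonneg_of_nonpos (inv_nonneg.mpr (norm_nonneg _)) (key n hyn)
  have hlim : Tendsto (fun n => rinner ((‖w n‖)⁻¹ • w n) w') atTop (𝓝 (rinner ξ w')) := by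
    simp only [rinner]
    exact hdir.inner tendsto_const_nhds
  exact le_of_tendsto hlim hterm

lemma N_inner_nonpos_of_wedgeCond {v : Euc d} {ε : ℝ} (hε : 0 < ε)
    (hwedge : ∀ y ∈ ball x ε ∩ S, ∀ z ∈ wedge v ε, y + z ∈ S)
    {p : Euc d} (hp : p ∈ clarkeNormalCone S x) {w' : Euc d} (hw' : w' ∈ ball v ε) :
    rinner p w' ≤ 0 := by
  obtain ⟨a, ha, ξ, hξ, rfl⟩ := hp
  set F : Set (Euc d) := {q | (inner ℝ q w' : ℝ) ≤ 0} with hF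
  have hFconv : Convex ℝ F := by
    apply convex_halfSpace_le (f := fun q : Euc d => (inner ℝ q w' : ℝ))
    exact ⟨fun a b => inner_add_left a b w', fun c a => real_inner_smul_left a w' c⟩
  have hFclosed : IsClosed F :=
    isClosed_le (Continuous.inner continuous_id continuous_const) continuous_const
  have hsub : closure (convexHull ℝ ({0} ∪ limProxDirs S x)) ⊆ F := by
    apply closure_minimal _ hFclosed
    apply convexHull_min _ hFconv
    rintro q (rfl | hq)
    · simp [hF]
    · exact limProx_inner_nonpos hε hwedge hq hw'
  have : (inner ℝ ξ w' : ℝ) ≤ 0 := hsub hξ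
  have h2 : rinner (a • ξ) w' = a * (inner ℝ ξ w' : ℝ) :=
    real_inner_smul_left _ _ _
  rw [h2]
  exact mul_nonpos_of_nonneg_of_nonpos ha this

lemma interior_nonempty_of_wedgeCond {v : Euc d} {ε : ℝ} (hε : 0 < ε)
    (hwedge : ∀ y ∈ ball x ε ∩ S, ∀ z ∈ wedge v ε, y + z ∈ S) :
    (interior (clarkeTangentCone S x)).Nonempty := by
  refine ⟨v, mem_interior.mpr ⟨ball v ε, ?_, isOpen_ball, mem_ball_self hε⟩⟩
  intro w' hw' p hp
  exact N_inner_nonpos_of_wedgeCond hε hwedge hp hw'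

lemma sum_pad {M : Type*} [AddCommMonoid M] {k n : ℕ} (hk : k ≤ n) (f : ℕ → M)
    (hf : ∀ m, k ≤ m → f m = 0) : ∑ j : Fin n, f j = ∑ i : Fin k, f i := by
  rw [Fin.sum_univ_eq_sum_range, Fin.sum_univ_eq_sum_range]
  exact (Finset.sum_subset (Finset.range_subset_range.mpr hk)
    (fun m _ hm => hf m (by simpa using hm))).symm

lemma caratheodory_repr {D : Set (Euc d)} {p : Euc d} (hp : p ∈ convexHull ℝ D) :
    ∃ W : Fin (d+1) → ℝ, ∃ Z : Fin (d+1) → Euc d,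
      (∀ i, 0 ≤ W i) ∧ (∑ i, W i = 1) ∧ (∀ i, Z i ∈ D) ∧ ∑ i, W i • Z i = p := by
  obtain ⟨ι, hfin, z, w, hrange, hindep, hwpos, hwsum, hsum⟩ :=
    eq_pos_convex_span_of_mem_convexHull hp
  have hne : Nonempty ι := by
    by_contra h
    rw [not_nonempty_iff] at h
    rw [Finset.univ_eq_empty, Finset.sum_empty] at hwsum
    norm_num at hwsum
  have hcard : Fintype.card ι ≤ d + 1 := by
    have h1 := hindep.card_le_finrank_succ
    have h2 : Module.finrank ℝ (vectorSpan ℝ (Set.range z)) ≤ Module.finrank ℝ (Euc d) :=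
      Submodule.finrank_le _
    have h3 : Module.finrank ℝ (Euc d) = d := finrank_euclideanSpace_fin
    omega
  set k := Fintype.card ι with hk
  have hkpos : 0 < k := Fintype.card_pos
  set e := Fintype.equivFin ι with he
  set wt : ℕ → ℝ := fun m => if h : m < k then w (e.symm ⟨m, h⟩) else 0 with hwt
  set zt : ℕ → Euc d :=
    fun m => if h : m < k then z (e.symm ⟨m, h⟩) else z (e.symm ⟨0, hkpos⟩) with hzt
  have hwte : ∀ i : Fin k, wt ↑i = w (e.symm i) := by
    intro i
    simp only [hwt]
    rw [dif_pos i.isLt, Fin.eta]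
  have hwze : ∀ i : Fin k, wt ↑i • zt ↑i = w (e.symm i) • z (e.symm i) := by
    intro i
    simp only [hwt, hzt]
    rw [dif_pos i.isLt, dif_pos i.isLt, Fin.eta]
  refine ⟨fun j => wt ↑j, fun j => zt ↑j, ?_, ?_, ?_, ?_⟩
  · intro j
    simp only [hwt]
    split
    · exact (hwpos _).le
    · exact le_refl 0
  · rw [sum_pad hcard wt (fun m hm => dif_neg (not_lt.mpr hm))]
    rw [Finset.sum_congr rfl (fun i _ => hwte i)]
    rw [Equiv.sum_comp e.symm w]
    exact hwsum
  · intro j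
    simp only [hzt]
    split
    · exact hrange (Set.mem_range_self _)
    · exact hrange (Set.mem_range_self _)
  · rw [sum_pad hcard (fun m => wt m • zt m)
      (fun m hm => by rw [hwt]; simp only; rw [dif_neg (not_lt.mpr hm), zero_smul])]
    rw [Finset.sum_congr rfl (fun i _ => hwze i)]
    rw [Equiv.sum_comp e.symm (fun i => w i • z i)]
    exact hsum

lemma exists_limProx_subseq
    (q w : ℕ → Euc d) (hq : ∀ n, q n ∈ S) (hqx : Tendsto q atTop (𝓝 x))
    (hw0 : ∀ n, w n ≠ 0) (hwlim : Tendsto w atTop (𝓝 0))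
    (hproj : ∀ n, infDist (q n + w n) S = ‖w n‖) :
    ∃ ξ ∈ limProxDirs S x, ∃ φ : ℕ → ℕ, StrictMono φ ∧
      Tendsto (fun n => (‖w (φ n)‖)⁻¹ • w (φ n)) atTop (𝓝 ξ) := by
  set u : ℕ → Euc d := fun n => (‖w n‖)⁻¹ • w n with hu
  have hun : ∀ n, u n ∈ sphere (0 : Euc d) 1 := by
    intro n
    rw [mem_sphere_zero_iff_norm, hu]
    simp only [norm_smul, norm_inv, norm_norm]
    exact inv_mul_cancel₀ (norm_ne_zero_iff.mpr (hw0 n))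
  obtain ⟨ξ, hξmem, φ, hφ, hconv⟩ :=
    tendsto_subseq_of_bounded (isBounded_sphere (x := (0:Euc d)) (r := 1)) hun
  rw [isClosed_sphere.closure_eq, mem_sphere_zero_iff_norm] at hξmem
  refine ⟨ξ, ⟨hξmem, q ∘ φ, w ∘ φ, fun n => hq _, hqx.comp hφ.tendsto_atTop,
    fun n => hw0 _, hwlim.comp hφ.tendsto_atTop, fun n => hproj _, hconv⟩, φ, hφ, hconv⟩

lemma limProx_nonempty (hS : IsClosed S) (hne : S.Nonempty) (hx : x ∈ frontier S) :
    (limProxDirs S x).Nonempty := by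
  have hxS : x ∈ S := hS.frontier_subset hx
  have hxc : x ∈ closure Sᶜ := by
    rw [frontier_eq_closure_inter_closure] at hx
    exact hx.2
  have hp : ∀ n : ℕ, ∃ p ∈ Sᶜ, dist x p < 1 / (n + 1) := by
    intro n
    exact Metric.mem_closure_iff.mp hxc _ (by positivity)
  choose p hpmem hpdist using hp
  have hq : ∀ n : ℕ, ∃ y ∈ S, infDist (p n) S = dist (p n) y :=
    fun n => hS.exists_infDist_eq_dist hne (p n)
  choose q hqS hqd using hq
  set w : ℕ → Euc d := fun n => p n - q n with hw
  have hw0 : ∀ n, w n ≠ 0 := by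
    intro n h
    exact hpmem n (by rw [sub_eq_zero] at h; rw [h]; exact hqS n)
  have hwn : ∀ n, ‖w n‖ ≤ 1 / (n + 1) := by
    intro n
    have h1 : ‖w n‖ = infDist (p n) S := by rw [hqd n, dist_eq_norm]
    rw [h1]
    exact le_trans (infDist_le_dist_of_mem hxS) (by rw [dist_comm]; exact (hpdist n).le)
  have hlim : Tendsto (fun n : ℕ => 1 / ((n : ℝ) + 1)) atTop (𝓝 0) :=
    tendsto_one_div_add_atTop_nhds_zero_nat
  have hwlim : Tendsto w atTop (𝓝 0) := by
    rw [tendsto_zero_iff_norm_tendsto_zero]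
    exact squeeze_zero (fun n => norm_nonneg _) hwn hlim
  have hqx : Tendsto q atTop (𝓝 x) := by
    rw [tendsto_iff_dist_tendsto_zero]
    apply squeeze_zero (fun n => dist_nonneg)
      (g := fun n : ℕ => 1 / ((n:ℝ) + 1) + 1 / ((n:ℝ) + 1))
    · intro n
      have h1 : dist (q n) x ≤ dist (q n) (p n) + dist (p n) x := dist_triangle _ _ _
      have h2 : dist (q n) (p n) ≤ 1 / ((n:ℝ)+1) := by
        rw [dist_comm, dist_eq_norm]
        exact hwn n
      have h3 : dist (p n) x ≤ 1 / ((n:ℝ)+1) := by rw [dist_comm]; exact (hpdist n).le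
      linarith
    · simpa using hlim.add hlim
  have hproj : ∀ n, infDist (q n + w n) S = ‖w n‖ := by
    intro n
    have : q n + w n = p n := by simp [hw]
    rw [this, hqd n, dist_eq_norm, hw]
  obtain ⟨ξ, hξ, _⟩ := exists_limProx_subseq q w hqS hqx hw0 hwlim hproj
  exact ⟨ξ, hξ⟩

lemma closureD_subset_N :
    closure (limProxDirs S x) ⊆ clarkeNormalCone S x := by
  intro ζ hζ
  refine ⟨1, zero_le_one, ζ, ?_, (one_smul ℝ ζ).symm⟩
  exact closure_mono (subset_trans Set.subset_union_right (subset_convexHull ℝ _)) hζ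

lemma norm_one_of_mem_closureD {ζ : Euc d}
    (hζ : ζ ∈ closure (limProxDirs S x)) : ‖ζ‖ = 1 := by
  have hsub : limProxDirs S x ⊆ sphere (0 : Euc d) 1 := by
    intro ξ hξ
    rw [mem_sphere_zero_iff_norm]
    exact hξ.1
  have := closure_mono hsub hζ
  rw [isClosed_sphere.closure_eq, mem_sphere_zero_iff_norm] at this
  exact this

lemma zero_not_mem_closure_convexHull (hW : WedgedAt S x) :
    (0 : Euc d) ∉ closure (convexHull ℝ (limProxDirs S x)) := by
  intro h0
  obtain ⟨ps, hpmem, hplim⟩ := mem_closure_iff_seq_limit.mp h0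
  have hrep := fun n => caratheodory_repr (hpmem n)
  choose W Z hW0 hWsum hZmem hZsum using hrep
  set A : Set ((Fin (d+1) → ℝ) × (Fin (d+1) → Euc d)) :=
    (stdSimplex ℝ (Fin (d+1))) ×ˢ (Set.univ.pi fun _ => closure (limProxDirs S x)) with hA
  have hDcmp : IsCompact (closure (limProxDirs S x)) := by
    apply Bornology.IsBounded.isCompact_closure
    apply (isBounded_sphere (x := (0:Euc d)) (r := 1)).subset
    intro ξ hξ
    rw [mem_sphere_zero_iff_norm]
    exact hξ.1
  have hAcmp : IsCompact A := (isCompact_stdSimplex ℝ _).prod (isCompact_univ_pi fun _ => hDcmp)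
  have hPA : ∀ n, (W n, Z n) ∈ A := by
    intro n
    constructor
    · exact ⟨hW0 n, hWsum n⟩
    · exact fun i _ => subset_closure (hZmem n i)
  obtain ⟨⟨Ws, Zs⟩, haA, φ, hφ, hPconv⟩ := hAcmp.tendsto_subseq hPA
  have hWs : Ws ∈ stdSimplex ℝ (Fin (d+1)) := haA.1
  have hZs : ∀ i, Zs i ∈ closure (limProxDirs S x) := fun i => haA.2 i (Set.mem_univ i)
  -- the evaluation map is continuous
  have hG : Continuous (fun pr : (Fin (d+1) → ℝ) × (Fin (d+1) → Euc d) =>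
      ∑ i, pr.1 i • pr.2 i) := by
    apply continuous_finset_sum
    intro i _
    exact ((continuous_apply i).comp continuous_fst).smul
      ((continuous_apply i).comp continuous_snd)
  have hlim1 : Tendsto (fun n => ∑ i, W (φ n) i • Z (φ n) i) atTop
      (𝓝 (∑ i, Ws i • Zs i)) := by
    have := (hG.tendsto (Ws, Zs)).comp hPconv
    exact this
  have hlim2 : Tendsto (fun n => ∑ i, W (φ n) i • Z (φ n) i) atTop (𝓝 0) := by
    have : (fun n => ∑ i, W (φ n) i • Z (φ n) i) = fun n => ps (φ n) := by
      funext n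
      exact hZsum (φ n)
    rw [this]
    exact hplim.comp hφ.tendsto_atTop
  have hzero : ∑ i, Ws i • Zs i = 0 := tendsto_nhds_unique hlim1 hlim2
  -- pick a positive weight
  have hsum1 : ∑ i, Ws i = 1 := hWs.2
  have : ∃ i₀ : Fin (d+1), Ws i₀ ≠ 0 := by
    by_contra h
    push_neg at h
    rw [Finset.sum_congr rfl (fun i _ => h i), Finset.sum_const, smul_zero] at hsum1
    norm_num at hsum1
  obtain ⟨i₀, hi₀⟩ := this
  have hi₀pos : 0 < Ws i₀ := lt_of_le_of_ne (hWs.1 i₀) (Ne.symm hi₀)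
  set p₀ := Zs i₀ with hp₀
  have hp₀N : p₀ ∈ clarkeNormalCone S x := closureD_subset_N (hZs i₀)
  have hrest : ∑ i ∈ Finset.univ.erase i₀, Ws i • Zs i ∈ clarkeNormalCone S x := by
    apply Finset.sum_induction _ (· ∈ clarkeNormalCone S x)
      (fun a b ha hb => add_mem_N ha hb) zero_mem_N
    intro i _
    exact smul_mem_N (closureD_subset_N (hZs i)) (hWs.1 i)
  have hkey : Ws i₀ • p₀ = -(∑ i ∈ Finset.univ.erase i₀, Ws i • Zs i) := by
    have := Finset.add_sum_erase Finset.univ (fun i => Ws i • Zs i) (Finset.mem_univ i₀)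
    rw [hzero] at this
    linear_combination (norm := module) this
  have hnegN : -p₀ ∈ clarkeNormalCone S x := by
    have h1 : -p₀ = (Ws i₀)⁻¹ • (-(Ws i₀ • p₀)) := by
      rw [smul_neg, smul_smul, inv_mul_cancel₀ (ne_of_gt hi₀pos), one_smul]
    rw [h1, hkey, neg_neg]
    exact smul_mem_N hrest (inv_nonneg.mpr hi₀pos.le)
  have hp₀0 : p₀ = 0 := by
    have : p₀ ∈ clarkeNormalCone S x ∩ (-(clarkeNormalCone S x)) :=
      ⟨hp₀N, Set.mem_neg.mpr hnegN⟩
    rw [hW] at this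
    exact this
  have : ‖p₀‖ = 1 := norm_one_of_mem_closureD (hZs i₀)
  rw [hp₀0, norm_zero] at this
  norm_num at this

lemma exists_sep (hS : IsClosed S) (hne : S.Nonempty) (hx : x ∈ frontier S)
    (hW : WedgedAt S x) :
    ∃ v : Euc d, ‖v‖ = 1 ∧ ∃ δ : ℝ, 0 < δ ∧ δ ≤ 1/2 ∧
      ∀ ξ ∈ limProxDirs S x, rinner ξ v ≤ -(2*δ) := by
  set M := closure (convexHull ℝ (limProxDirs S x)) with hM
  have h0 : (0 : Euc d) ∉ M := zero_not_mem_closure_convexHull hW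
  obtain ⟨f, u, hfu, hu0⟩ :=
    geometric_hahn_banach_closed_point ((convex_convexHull ℝ _).closure) isClosed_closure h0
  rw [map_zero] at hu0
  obtain ⟨ξ₀, hξ₀⟩ := limProx_nonempty hS hne hx
  have hξ₀M : ξ₀ ∈ M := subset_closure (subset_convexHull ℝ _ hξ₀)
  set vf := (InnerProductSpace.toDual ℝ (Euc d)).symm f with hvf
  have hvfy : ∀ y : Euc d, (inner ℝ vf y : ℝ) = f y :=
    fun y => InnerProductSpace.toDual_symm_apply
  have hvf0 : vf ≠ 0 := by
    intro h
    have := hvfy ξ₀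
    rw [h, inner_zero_left] at this
    have h1 := hfu ξ₀ hξ₀M
    rw [← this] at h1
    linarith
  have hnvf : 0 < ‖vf‖ := norm_pos_iff.mpr hvf0
  set v : Euc d := (‖vf‖)⁻¹ • vf with hv
  set δ : ℝ := -u / (2 * ‖vf‖) with hδ
  have hδpos : 0 < δ := div_pos (by linarith) (by positivity)
  have hvnorm : ‖v‖ = 1 := by
    rw [hv, norm_smul, norm_inv, norm_norm]
    exact inv_mul_cancel₀ (ne_of_gt hnvf)
  have hineq : ∀ ξ ∈ limProxDirs S x, rinner ξ v ≤ -(2*δ) := by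
    intro ξ hξ
    have hξM : ξ ∈ M := subset_closure (subset_convexHull ℝ _ hξ)
    have h1 : f ξ ≤ u := (hfu ξ hξM).le
    have h2 : rinner ξ v = (‖vf‖)⁻¹ * f ξ := by
      rw [rinner, hv, real_inner_smul_right, real_inner_comm, hvfy]
    rw [h2]
    have h3 : -(2 * δ) = (‖vf‖)⁻¹ * u := by rw [hδ]; field_simp
    rw [h3]
    exact mul_le_mul_of_nonneg_left h1 (inv_nonneg.mpr hnvf.le)
  have hδhalf : δ ≤ 1/2 := by
    have h1 := hineq ξ₀ hξ₀
    have h2 : |rinner ξ₀ v| ≤ ‖ξ₀‖ * ‖v‖ := abs_real_inner_le_norm ξ₀ v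
    rw [hξ₀.1, hvnorm, one_mul] at h2
    have h3 : -1 ≤ rinner ξ₀ v := neg_le_of_abs_le h2
    linarith
  exact ⟨v, hvnorm, δ, hδpos, hδhalf, hineq⟩

lemma prox_inner_bound {v : Euc d} {δ : ℝ} (hδ : 0 < δ)
    (hineq : ∀ ξ ∈ limProxDirs S x, rinner ξ v ≤ -(2*δ)) :
    ∃ r : ℝ, 0 < r ∧ ∀ q ∈ S, dist q x ≤ r → ∀ w : Euc d, w ≠ 0 → ‖w‖ ≤ r →
      infDist (q + w) S = ‖w‖ → rinner w v ≤ -δ * ‖w‖ := by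
  by_contra hcon
  push_neg at hcon
  have hbad : ∀ n : ℕ, ∃ q ∈ S, dist q x ≤ 1/((n:ℝ)+1) ∧ ∃ w : Euc d, w ≠ 0 ∧
      ‖w‖ ≤ 1/((n:ℝ)+1) ∧ infDist (q + w) S = ‖w‖ ∧ -δ * ‖w‖ < rinner w v := by
    intro n
    obtain ⟨q, hq, hqd, w, hw0, hwn, hproj, hiv⟩ := hcon (1/((n:ℝ)+1)) (by positivity)
    exact ⟨q, hq, hqd, w, hw0, hwn, hproj, hiv⟩
  choose q hqS hqd w hw0 hwn hproj hiv using hbad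
  have hlim : Tendsto (fun n : ℕ => 1 / ((n : ℝ) + 1)) atTop (𝓝 0) :=
    tendsto_one_div_add_atTop_nhds_zero_nat
  have hqx : Tendsto q atTop (𝓝 x) := by
    rw [tendsto_iff_dist_tendsto_zero]
    exact squeeze_zero (fun n => dist_nonneg) hqd hlim
  have hwlim : Tendsto w atTop (𝓝 0) := by
    rw [tendsto_zero_iff_norm_tendsto_zero]
    exact squeeze_zero (fun n => norm_nonneg _) hwn hlim
  obtain ⟨ξ, hξ, φ, hφ, hconv⟩ := exists_limProx_subseq q w hqS hqx hw0 hwlim hproj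
  have hterm : ∀ n, -δ ≤ rinner ((‖w (φ n)‖)⁻¹ • w (φ n)) v := by
    intro n
    have hwp : (0:ℝ) < ‖w (φ n)‖ := norm_pos_iff.mpr (hw0 (φ n))
    have h1 : rinner ((‖w (φ n)‖)⁻¹ • w (φ n)) v = (‖w (φ n)‖)⁻¹ * rinner (w (φ n)) v :=
      real_inner_smul_left _ _ _
    rw [h1]
    have h2 : -δ * ‖w (φ n)‖ ≤ rinner (w (φ n)) v := (hiv (φ n)).le
    have h3 : (‖w (φ n)‖)⁻¹ * (-δ * ‖w (φ n)‖) ≤ (‖w (φ n)‖)⁻¹ * rinner (w (φ n)) v :=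
      mul_le_mul_of_nonneg_left h2 (inv_nonneg.mpr hwp.le)
    calc -δ = (‖w (φ n)‖)⁻¹ * (-δ * ‖w (φ n)‖) := by field_simp
      _ ≤ _ := h3
  have hl : Tendsto (fun n => rinner ((‖w (φ n)‖)⁻¹ • w (φ n)) v) atTop (𝓝 (rinner ξ v)) := by
    simp only [rinner]
    exact hconv.inner tendsto_const_nhds
  have h4 : -δ ≤ rinner ξ v := ge_of_tendsto hl (Filter.Eventually.of_forall hterm)
  have h5 : rinner ξ v ≤ -(2*δ) := hineq ξ hξ
  linarith

lemma loc_right_noninc {f : ℝ → ℝ} {a b : ℝ} (hab : a ≤ b) (hf : Continuous f)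
    (H : ∀ t, a ≤ t → t < b → ∃ η > 0, ∀ τ, t < τ → τ ≤ t + η → τ ≤ b → f τ ≤ f t) :
    f b ≤ f a := by
  set E : Set ℝ := {t | t ∈ Icc a b ∧ ∀ τ ∈ Icc a t, f τ ≤ f a} with hE
  have haE : a ∈ E := by
    refine ⟨⟨le_refl a, hab⟩, fun τ hτ => ?_⟩
    rw [le_antisymm hτ.2 hτ.1]
  have hEne : E.Nonempty := ⟨a, haE⟩
  have hEbdd : BddAbove E := ⟨b, fun t ht => ht.1.2⟩
  set c := sSup E with hc
  have hac : a ≤ c := le_csSup hEbdd haE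
  have hcb : c ≤ b := csSup_le hEne (fun t ht => ht.1.2)
  have hfc : ∀ τ, a ≤ τ → τ < c → f τ ≤ f a := by
    intro τ hτa hτc
    obtain ⟨t, htE, hτt⟩ := exists_lt_of_lt_csSup hEne hτc
    exact htE.2 τ ⟨hτa, hτt.le⟩
  have hfcc : f c ≤ f a := by
    rcases eq_or_lt_of_le hac with h | h
    · rw [← h]
    · have hne : (Set.Ioo a c).Nonempty := ⟨(a+c)/2, by constructor <;> linarith⟩
      have hcl : c ∈ closure (Set.Ioo a c) := by
        rw [closure_Ioo (ne_of_lt h)]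
        exact ⟨hac, le_refl c⟩
      haveI : (𝓝[Set.Ioo a c] c).NeBot := mem_closure_iff_nhdsWithin_neBot.mp hcl
      have htd : Tendsto f (𝓝[Set.Ioo a c] c) (𝓝 (f c)) :=
        (hf.tendsto c).mono_left nhdsWithin_le_nhds
      refine le_of_tendsto htd ?_
      filter_upwards [self_mem_nhdsWithin] with τ hτ
      exact hfc τ hτ.1.le hτ.2
  have hcE : c ∈ E := by
    refine ⟨⟨hac, hcb⟩, fun τ hτ => ?_⟩
    rcases lt_or_eq_of_le hτ.2 with h | h
    · exact hfc τ hτ.1 h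
    · rw [h]; exact hfcc
  rcases eq_or_lt_of_le hcb with h | h
  · rw [← h]; exact hfcc
  · obtain ⟨η, hη, hprop⟩ := H c hac h
    set c' := min b (c + η) with hc'
    have hcc' : c < c' := lt_min h (by linarith)
    have hc'E : c' ∈ E := by
      refine ⟨⟨by linarith, min_le_left _ _⟩, fun τ hτ => ?_⟩
      rcases le_or_gt τ c with h2 | h2
      · exact hcE.2 τ ⟨hτ.1, h2⟩
      · have h3 : f τ ≤ f c := hprop τ h2 (le_trans hτ.2 (min_le_right _ _))
          (le_trans hτ.2 (min_le_left _ _))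
        linarith [hfcc]
    have := le_csSup hEbdd hc'E
    rw [← hc] at this
    linarith

set_option maxHeartbeats 1000000 in
lemma wedgeCond_of_wedged (hS : IsClosed S) (hne : S.Nonempty) (hx : x ∈ frontier S)
    (hW : WedgedAt S x) :
    ∃ v : Euc d, ∃ ε : ℝ, 0 < ε ∧ ∀ y ∈ ball x ε ∩ S, ∀ z ∈ wedge v ε, y + z ∈ S := by
  obtain ⟨v, hv1, δ, hδ, hδh, hineq⟩ := exists_sep hS hne hx hW
  obtain ⟨r, hr, hclaim⟩ := prox_inner_bound hδ hineq
  set ε := min (δ/2) (min 1 (r/5)) with hεdef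
  have hε0 : 0 < ε := lt_min (by linarith) (lt_min one_pos (by linarith))
  have hεδ : ε ≤ δ/2 := min_le_left _ _
  have hε1 : ε ≤ 1 := le_trans (min_le_right _ _) (min_le_left _ _)
  have hεr : 5*ε ≤ r := by
    have h5 : ε ≤ r/5 := le_trans (min_le_right (δ/2) (min 1 (r/5))) (min_le_right 1 (r/5))
    linarith
  refine ⟨v, ε, hε0, ?_⟩
  rintro y ⟨hyb, hyS⟩ z ⟨w', hw'b, s, hs, rfl⟩
  have hw'v : ‖w' - v‖ ≤ ε := by
    rw [mem_ball, dist_eq_norm] at hw'b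
    exact hw'b.le
  have hw'n : ‖w'‖ ≤ 2 := by
    calc ‖w'‖ = ‖v + (w' - v)‖ := by congr 1; abel
      _ ≤ ‖v‖ + ‖w' - v‖ := norm_add_le _ _
      _ ≤ 1 + 1 := by rw [hv1]; linarith
      _ = 2 := by norm_num
  set h : ℝ → ℝ := fun t => infDist (y + t • w') S with hh
  have hcont : Continuous h :=
    (continuous_infDist_pt S).comp (continuous_const.add (continuous_id.smul continuous_const))
  have hyd : dist y x ≤ ε := by
    rw [mem_ball] at hyb
    exact hyb.le
  have hdecay : ∀ t, 0 ≤ t → t ≤ s → 0 < h t →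
      ∀ τ, t < τ → τ ≤ t + (δ/16) * h t → h τ ≤ h t := by
    intro t ht0 hts hpos τ hτ1 hτ2
    obtain ⟨q, hqS, hqd⟩ := hS.exists_infDist_eq_dist hne (y + t • w')
    set wv : Euc d := y + t • w' - q with hwv
    have hwnorm : ‖wv‖ = h t := by
      rw [hwv, ← dist_eq_norm, ← hqd]
    have hwv0 : wv ≠ 0 := by
      intro hcontra
      rw [hcontra, norm_zero] at hwnorm
      linarith
    have htε : t ≤ ε := le_trans hts hs.2
    have hht : h t ≤ 2*ε := by
      have h1 : h t ≤ dist (y + t • w') y := infDist_le_dist_of_mem hyS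
      have h2 : dist (y + t • w') y = t * ‖w'‖ := by
        rw [dist_eq_norm]
        have : y + t • w' - y = t • w' := by abel
        rw [this, norm_smul, Real.norm_eq_abs, abs_of_nonneg ht0]
      rw [h2] at h1
      calc h t ≤ t * ‖w'‖ := h1
        _ ≤ ε * 2 := mul_le_mul htε hw'n (norm_nonneg _) hε0.le
        _ = 2*ε := by ring
    have hwr : ‖wv‖ ≤ r := by rw [hwnorm]; linarith
    have hqxd : dist q x ≤ r := by
      have h1 : dist q x ≤ dist q (y + t • w') + dist (y + t • w') y + dist y x :=
        dist_triangle4 _ _ _ _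
      have h2 : dist q (y + t • w') = h t := by rw [dist_comm, ← hqd]
      have h3 : dist (y + t • w') y ≤ 2*ε := by
        rw [dist_eq_norm]
        have : y + t • w' - y = t • w' := by abel
        rw [this, norm_smul, Real.norm_eq_abs, abs_of_nonneg ht0]
        calc t * ‖w'‖ ≤ ε * 2 := mul_le_mul htε hw'n (norm_nonneg _) hε0.le
          _ = 2*ε := by ring
      rw [h2] at h1
      linarith
    have hproj : infDist (q + wv) S = ‖wv‖ := by
      have he : q + wv = y + t • w' := by rw [hwv]; abel
      rw [he, hqd, dist_eq_norm, hwv]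
    have hip : rinner wv v ≤ -δ * ‖wv‖ := hclaim q hqS hqxd wv hwv0 hwr hproj
    have hip2 : rinner wv w' ≤ -(δ/2) * ‖wv‖ := by
      have h1 : rinner wv w' = rinner wv v + (inner ℝ wv (w' - v) : ℝ) := by
        rw [rinner, rinner, ← inner_add_right]
        congr 1
        abel
      have h2 : (inner ℝ wv (w' - v) : ℝ) ≤ ‖wv‖ * ‖w' - v‖ := real_inner_le_norm _ _
      have h3 : ‖wv‖ * ‖w' - v‖ ≤ ‖wv‖ * ε := by
        apply mul_le_mul_of_nonneg_left hw'v (norm_nonneg _)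
      rw [h1]
      have h4 : ‖wv‖ * ε ≤ ‖wv‖ * (δ/2) := by
        apply mul_le_mul_of_nonneg_left hεδ (norm_nonneg _)
      nlinarith [norm_nonneg wv]
    set σ := τ - t with hσ
    clear_value σ
    have hσpos : 0 < σ := by simp [hσ]; linarith
    have hσle : σ ≤ (δ/16) * ‖wv‖ := by rw [hwnorm]; simp [hσ]; linarith
    have hτeq : y + τ • w' - q = wv + σ • w' := by
      rw [hwv, hσ, sub_smul]
      abel
    have hub : h τ ≤ ‖wv + σ • w'‖ := by
      have h1 : h τ ≤ dist (y + τ • w') q := infDist_le_dist_of_mem hqS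
      rw [dist_eq_norm, hτeq] at h1
      exact h1
    have hexp : ‖wv + σ • w'‖^2 = ‖wv‖^2 + 2*(σ * rinner wv w') + σ^2 * ‖w'‖^2 := by
      rw [norm_add_sq_real, real_inner_smul_right, norm_smul, mul_pow]
      simp only [Real.norm_eq_abs, sq_abs, rinner]
      try ring
    have hsq : ‖wv + σ • w'‖^2 ≤ ‖wv‖^2 := by
      rw [hexp]
      have f1 : σ * rinner wv w' ≤ σ * (-(δ/2) * ‖wv‖) :=
        mul_le_mul_of_nonneg_left hip2 hσpos.le
      have fw : ‖w'‖^2 ≤ 4 := by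
        have := pow_le_pow_left₀ (norm_nonneg w') hw'n 2
        norm_num at this
        linarith
      have f2 : σ^2 * ‖w'‖^2 ≤ σ^2 * 4 :=
        mul_le_mul_of_nonneg_left fw (sq_nonneg σ)
      have f3 : σ * σ ≤ σ * ((δ/16) * ‖wv‖) :=
        mul_le_mul_of_nonneg_left hσle hσpos.le
      have f4 : 0 ≤ δ * (σ * ‖wv‖) :=
        mul_nonneg hδ.le (mul_nonneg hσpos.le (norm_nonneg wv))
      linarith [f1, f2, f3, f4]
    have hle : ‖wv + σ • w'‖ ≤ ‖wv‖ := by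
      have := Real.sqrt_le_sqrt hsq
      rwa [Real.sqrt_sq (norm_nonneg _), Real.sqrt_sq (norm_nonneg _)] at this
    rw [← hwnorm]
    exact le_trans hub hle
  -- now conclude h s = 0
  have h00 : h 0 = 0 := by
    have : y + (0:ℝ) • w' = y := by simp
    rw [hh]
    simp only [this, zero_smul, add_zero]
    exact infDist_zero_of_mem hyS
  have hs0 : 0 ≤ s := hs.1
  set A : Set ℝ := Set.Icc 0 s ∩ h ⁻¹' {0} with hA
  have hAcl : IsClosed A := isClosed_Icc.inter (isClosed_singleton.preimage hcont)
  have h0A : (0:ℝ) ∈ A := ⟨⟨le_refl 0, hs0⟩, h00⟩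
  have hAne : A.Nonempty := ⟨0, h0A⟩
  have hAbdd : BddAbove A := ⟨s, fun t ht => ht.1.2⟩
  set t₀ := sSup A with ht₀
  have ht₀A : t₀ ∈ A := hAcl.csSup_mem hAne hAbdd
  have ht₀0 : 0 ≤ t₀ := ht₀A.1.1
  have ht₀s : t₀ ≤ s := ht₀A.1.2
  have ht₀z : h t₀ = 0 := ht₀A.2
  have hfin : h s = 0 := by
    rcases eq_or_lt_of_le ht₀s with he | hlt
    · rw [← he]; exact ht₀z
    · have hpos : ∀ t, t₀ < t → t ≤ s → 0 < h t := by
        intro t h1 h2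
        rcases lt_or_eq_of_le (infDist_nonneg : 0 ≤ h t) with h3 | h3
        · exact h3
        · exfalso
          have hmem : t ∈ A := ⟨⟨by linarith, h2⟩, h3.symm⟩
          have := le_csSup hAbdd hmem
          rw [← ht₀] at this
          linarith
      have hmain : ∀ t₁, t₀ < t₁ → t₁ ≤ s → h s ≤ h t₁ := by
        intro t₁ h1 h2
        apply loc_right_noninc h2 hcont
        intro t ht1 hts
        have htpos : 0 < h t := hpos t (by linarith) hts.le
        refine ⟨(δ/16) * h t, by positivity, ?_⟩
        intro τ hτ1 hτ2 _
        exact hdecay t (by linarith) hts.le htpos τ hτ1 hτ2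
      have hlimit : Tendsto h (𝓝[Set.Ioc t₀ s] t₀) (𝓝 (h t₀)) :=
        (hcont.tendsto t₀).mono_left nhdsWithin_le_nhds
      have hnb : (𝓝[Set.Ioc t₀ s] t₀).NeBot := by
        apply mem_closure_iff_nhdsWithin_neBot.mp
        rw [closure_Ioc (ne_of_lt hlt)]
        exact ⟨le_refl t₀, ht₀s⟩
      have hle0 : h s ≤ h t₀ := by
        refine ge_of_tendsto hlimit ?_
        filter_upwards [self_mem_nhdsWithin] with τ hτ
        exact hmain τ hτ.1 hτ.2
      rw [ht₀z] at hle0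
      exact le_antisymm hle0 infDist_nonneg
  rw [hh] at hfin
  exact (hS.mem_iff_infDist_zero hne).mpr hfin

end WedgedAux
/-- **Proposition 2.5 (characterization of wedged sets).** For a closed nonempty `S` and a
boundary point `x`, the following are equivalent: (i) `S` is wedged at `x`; (ii) the Clarke
tangent cone at `x` has nonempty interior; (iii) a wedge condition holds near `x`. -/
theorem wedged_characterization {d : ℕ} (S : Set (Euc d)) (hS : IsClosed S)
    (hne : S.Nonempty) (x : Euc d) (hx : x ∈ frontier S) :
    (WedgedAt S x ↔ (interior (clarkeTangentCone S x)).Nonempty) ∧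
    (WedgedAt S x ↔
      ∃ v : Euc d, ∃ ε : ℝ, 0 < ε ∧
        ∀ y ∈ ball x ε ∩ S, ∀ z ∈ wedge v ε, y + z ∈ S) := by
  constructor
  · constructor
    · intro hW
      obtain ⟨v, ε, hε, hcond⟩ := WedgedAux.wedgeCond_of_wedged hS hne hx hW
      exact WedgedAux.interior_nonempty_of_wedgeCond hε hcond
    · exact WedgedAux.wedged_of_interior_nonempty
  · constructor
    · exact WedgedAux.wedgeCond_of_wedged hS hne hx
    · rintro ⟨v, ε, hε, hcond⟩
      exact WedgedAux.wedged_of_interior_nonempty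
        (WedgedAux.interior_nonempty_of_wedgeCond hε hcond)
end
end

section
/- Let Z ⊆ ℝ^d be a closed set which is wedged at a point x ∈ ∂Z. Assume v ∈ ℝ^d and ε > 0 are such that: y + W(v,ε) ⊆ Z for all y ∈ (x + εB_d) ∩ Z, and y + W(−v,ε) ⊆ closure(ℝ^d ∖ Z) for all y ∈ (x + εB_d) ∖ interior(Z). Then there exists a neighborhood N_x of x such that for all y ∈ N_x ∖ ∂Z at which the signed distance function Δ_Z is differentiable, the directional derivative of Δ_Z at y in the direction v satisfies ∇Δ_Z(y)·v ≤ −ε. -/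
open Set Metric Filter Topology MeasureTheory
open scoped Pointwise

noncomputable section

/-- closed-ball version of the wedge inclusion. -/
lemma wedge_closed_mem {d : ℕ} {C : Set (Euc d)} (hC : IsClosed C) {v : Euc d} {ε : ℝ}
    (hε : 0 < ε) {y : Euc d} (h : ∀ z ∈ wedge v ε, y + z ∈ C) {t : ℝ}
    (ht : t ∈ Icc 0 ε) {w : Euc d} (hw : ‖w‖ ≤ ε) : y + t • (v + w) ∈ C := by
  have hc : Tendsto (fun n : ℕ => (1 - 1/(n+1) : ℝ)) atTop (𝓝 1) := by
    have h0 : Tendsto (fun n : ℕ => (1/(n+1) : ℝ)) atTop (𝓝 0) :=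
      tendsto_one_div_add_atTop_nhds_zero_nat
    simpa using (tendsto_const_nhds (α := ℕ) (x := (1:ℝ))).sub h0
  have hseq : Tendsto (fun n : ℕ => y + t • (v + (1 - 1/(n+1) : ℝ) • w)) atTop
      (𝓝 (y + t • (v + w))) := by
    have h1 : Tendsto (fun n : ℕ => (1 - 1/(n+1) : ℝ) • w) atTop (𝓝 w) := by
      simpa using hc.smul_const w
    exact (((tendsto_const_nhds.add h1).const_smul t).const_add y)
  refine hC.mem_of_tendsto hseq (Filter.Eventually.of_forall fun n => ?_)
  apply h
  have hn0 : (0:ℝ) ≤ 1 - 1/(n+1) := by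
    have : (1:ℝ)/(n+1) ≤ 1 := by
      rw [div_le_one (by positivity)]; linarith [Nat.cast_nonneg (α := ℝ) n]
    linarith
  have hn1 : (1 - 1/(n+1) : ℝ) < 1 := by
    have : (0:ℝ) < 1/(n+1) := by positivity
    linarith
  refine ⟨v + (1 - 1/(n+1) : ℝ) • w, ?_, t, ht, rfl⟩
  rw [mem_ball, dist_eq_norm, add_sub_cancel_left, norm_smul, Real.norm_eq_abs,
    abs_of_nonneg hn0]
  calc (1 - 1/(n+1) : ℝ) * ‖w‖ ≤ (1 - 1/(n+1) : ℝ) * ε := by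
        exact mul_le_mul_of_nonneg_left hw hn0
    _ < 1 * ε := by exact mul_lt_mul_of_pos_right hn1 hε
    _ = ε := one_mul ε

lemma norm_sub_proj {E : Type*} [NormedAddCommGroup E] [NormedSpace ℝ E] {u : E} (hu : u ≠ 0)
    {c : ℝ} (hc0 : 0 ≤ c) (hc : c ≤ ‖u‖) : ‖u - (c/‖u‖) • u‖ = ‖u‖ - c := by
  have h0 : (0:ℝ) < ‖u‖ := norm_pos_iff.mpr hu
  have he : u - (c/‖u‖) • u = (1 - c/‖u‖) • u := by rw [sub_smul, one_smul]
  have hnn : (0:ℝ) ≤ 1 - c/‖u‖ := by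
    rw [sub_nonneg, div_le_one h0]; exact hc
  rw [he, norm_smul, Real.norm_eq_abs, abs_of_nonneg hnn, sub_mul, one_mul,
    div_mul_cancel₀ _ (ne_of_gt h0)]

/-- Decrease when `y ∉ Z`. -/
lemma decrease_outside {d : ℕ} {Z : Set (Euc d)} (hZ : IsClosed Z)
    {x : Euc d} (hxZ : x ∈ Z) {v : Euc d} {ε : ℝ} (hε : 0 < ε)
    (h1 : ∀ y ∈ ball x ε ∩ Z, ∀ z ∈ wedge v ε, y + z ∈ Z)
    {y : Euc d} (hy : y ∈ ball x (ε/4)) (hyZ : y ∉ Z)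
    {t : ℝ} (ht0 : 0 < t) (htε : t ≤ ε) (htd : ε * t ≤ infDist y Z) :
    signedDistFn Z (y + t • v) ≤ signedDistFn Z y - ε * t := by
  obtain ⟨z, hzZ, hz⟩ := hZ.exists_infDist_eq_dist ⟨x, hxZ⟩ y
  have hyx : dist y x < ε/4 := mem_ball.mp hy
  have hdle : infDist y Z ≤ dist y x := infDist_le_dist_of_mem hxZ
  have hzx : dist z x < ε := by
    calc dist z x ≤ dist z y + dist y x := dist_triangle z y x
      _ = infDist y Z + dist y x := by rw [dist_comm, ← hz]
      _ < ε := by linarith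
  set u := y - z with hu
  have hun : ‖u‖ = infDist y Z := by rw [hz, dist_eq_norm]
  have hupos : (0:ℝ) < ‖u‖ := by
    rw [hun]; linarith [mul_pos hε ht0]
  have huz : u ≠ 0 := by intro h; rw [h, norm_zero] at hupos; linarith
  -- the point p in Z
  have hwn : ‖(ε/‖u‖) • u‖ = ε := by
    rw [norm_smul, Real.norm_eq_abs, abs_of_nonneg (by positivity),
      div_mul_cancel₀ _ (ne_of_gt hupos)]
  have hpZ : z + t • (v + (ε/‖u‖) • u) ∈ Z :=
    wedge_closed_mem hZ hε (h1 z ⟨mem_ball.mpr hzx, hzZ⟩) ⟨le_of_lt ht0, htε⟩ (le_of_eq hwn)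
  have hcalc : y + t • v - (z + t • (v + (ε/‖u‖) • u)) = u - (ε*t/‖u‖) • u := by
    rw [smul_add, smul_smul]
    rw [show t * (ε/‖u‖) = ε*t/‖u‖ by ring]
    abel_nf
    module
  have hkey : infDist (y + t • v) Z ≤ ‖u‖ - ε * t := by
    calc infDist (y + t • v) Z ≤ dist (y + t • v) (z + t • (v + (ε/‖u‖) • u)) :=
          infDist_le_dist_of_mem hpZ
      _ = ‖u - (ε*t/‖u‖) • u‖ := by rw [dist_eq_norm, hcalc]
      _ = ‖u‖ - ε * t := norm_sub_proj huz (by positivity) (by rw [hun]; exact htd)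
  have hy0 : infDist y (closure Zᶜ) = 0 :=
    infDist_zero_of_mem (subset_closure (by exact hyZ))
  have h2nn : 0 ≤ infDist (y + t • v) (closure Zᶜ) := infDist_nonneg
  unfold signedDistFn
  rw [hy0, hun] at *
  linarith [hkey]

/-- Decrease when `y ∈ interior Z`. -/
lemma decrease_inside {d : ℕ} {Z : Set (Euc d)} (hZ : IsClosed Z)
    {x : Euc d} (hxZ : x ∈ Z) (hxC : x ∈ closure Zᶜ) {v : Euc d} {ε : ℝ} (hε : 0 < ε)
    (h1 : ∀ y ∈ ball x ε ∩ Z, ∀ z ∈ wedge v ε, y + z ∈ Z)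
    (h2 : ∀ y ∈ ball x ε, y ∉ interior Z → ∀ z ∈ wedge (-v) ε, y + z ∈ closure Zᶜ)
    {y : Euc d} (hy : y ∈ ball x (ε/4)) (hyZ : y ∈ interior Z)
    {t : ℝ} (ht0 : 0 < t) (htε : t ≤ ε) (htv : t * (ε + ‖v‖) < ε/2) :
    signedDistFn Z (y + t • v) ≤ signedDistFn Z y - ε * t := by
  have hyx : dist y x < ε/4 := mem_ball.mp hy
  have hyZ' : y ∈ Z := interior_subset hyZ
  have hyball : y ∈ ball x ε := mem_ball.mpr (by linarith)
  -- y + t v ∈ Z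
  have hmemZ : y + t • v ∈ Z := by
    have := wedge_closed_mem hZ hε (h1 y ⟨hyball, hyZ'⟩) ⟨le_of_lt ht0, htε⟩
      (w := 0) (by simp [le_of_lt hε])
    simpa using this
  set D := infDist y (closure Zᶜ) with hD
  have hDle : D ≤ dist y x := infDist_le_dist_of_mem hxC
  have hCne : (closure Zᶜ).Nonempty := ⟨x, hxC⟩
  have hCcl : IsClosed (closure Zᶜ) := isClosed_closure
  have hIC : closure Zᶜ = (interior Z)ᶜ := closure_compl
  -- lower bound on the distance of y + t v to closure Zᶜ
  have hlow : D + ε * t ≤ infDist (y + t • v) (closure Zᶜ) := by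
    by_contra hcon
    push_neg at hcon
    obtain ⟨p, hp, hcon⟩ := (infDist_lt_iff hCne).mp hcon
    have hpI : p ∉ interior Z := by rw [hIC] at hp; exact hp
    have hpx : dist p x < ε := by
      calc dist p x ≤ dist p (y + t • v) + dist (y + t • v) y + dist y x := by
            exact dist_triangle4 p (y + t • v) y x
        _ < (D + ε * t) + t * ‖v‖ + ε/4 := by
            have : dist (y + t • v) y = t * ‖v‖ := by
              rw [dist_eq_norm, add_sub_cancel_left, norm_smul, Real.norm_eq_abs,
                abs_of_pos ht0]
            rw [dist_comm p, this] at *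
            linarith [hcon]
        _ < ε := by nlinarith [hDle, hyx]
    have hwp : ∀ z ∈ wedge (-v) ε, p + z ∈ closure Zᶜ := h2 p (mem_ball.mpr hpx) hpI
    set r := y + t • v - p with hr
    have hrn : ‖r‖ < D + ε * t := by rw [hr, ← dist_eq_norm]; exact hcon
    by_cases hcase : ‖r‖ ≤ ε * t
    · -- then y itself lies in closure Zᶜ, contradicting y ∈ interior Z
      have hyC : y ∈ closure Zᶜ := by
        have hmem := wedge_closed_mem hCcl hε hwp (v := -v) ⟨le_of_lt ht0, htε⟩
          (w := t⁻¹ • r) ?_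
        · have : p + t • (-v + t⁻¹ • r) = y := by
            rw [smul_add, smul_smul, mul_inv_cancel₀ (ne_of_gt ht0), one_smul, hr]
            module
          rwa [this] at hmem
        · rw [norm_smul, Real.norm_eq_abs, abs_of_pos (inv_pos.mpr ht0)]
          rw [inv_mul_le_iff₀ ht0, mul_comm]
          exact hcase
      rw [hIC] at hyC
      exact hyC hyZ
    · push_neg at hcase
      have hr0 : r ≠ 0 := by
        intro h; rw [h, norm_zero] at hcase; nlinarith
      have hwn : ‖(ε/‖r‖) • r‖ = ε := by
        rw [norm_smul, Real.norm_eq_abs, abs_of_nonneg (by positivity),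
          div_mul_cancel₀ _ (ne_of_gt (norm_pos_iff.mpr hr0))]
      have hqC : p + t • (-v + (ε/‖r‖) • r) ∈ closure Zᶜ :=
        wedge_closed_mem hCcl hε hwp ⟨le_of_lt ht0, htε⟩ (le_of_eq hwn)
      have hcalc : y - (p + t • (-v + (ε/‖r‖) • r)) = r - (ε*t/‖r‖) • r := by
        rw [smul_add, smul_smul, show t * (ε/‖r‖) = ε*t/‖r‖ by ring, hr]
        abel_nf
        module
      have : D ≤ ‖r‖ - ε * t := by
        calc D ≤ dist y (p + t • (-v + (ε/‖r‖) • r)) := infDist_le_dist_of_mem hqC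
          _ = ‖r - (ε*t/‖r‖) • r‖ := by rw [dist_eq_norm, hcalc]
          _ = ‖r‖ - ε * t := norm_sub_proj hr0 (by positivity) (le_of_lt hcase)
      linarith
  have hz0 : infDist (y + t • v) Z = 0 := infDist_zero_of_mem hmemZ
  have hy0 : infDist y Z = 0 := infDist_zero_of_mem hyZ'
  unfold signedDistFn
  rw [hz0, hy0]
  linarith

/-- **Lemma 2.7 (decrease of the signed distance, Lemma 3.7 in [CRS]).** If the closed set `Z`
is wedged at `x ∈ ∂Z` and the two wedge conditions of radius `ε` hold around `x` with axis `v`,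
then near `x` the signed distance `Δ_Z` decreases at rate at least `ε` in the direction `v` at
every point of differentiability off `∂Z`. -/
theorem signed_distance_decrease {d : ℕ} (Z : Set (Euc d)) (hZ : IsClosed Z)
    (x : Euc d) (hx : x ∈ frontier Z) (hw : WedgedAt Z x)
    (v : Euc d) (ε : ℝ) (hε : 0 < ε)
    (h1 : ∀ y ∈ ball x ε ∩ Z, ∀ z ∈ wedge v ε, y + z ∈ Z)
    (h2 : ∀ y ∈ ball x ε, y ∉ interior Z → ∀ z ∈ wedge (-v) ε, y + z ∈ closure Zᶜ) :
    ∃ Nx ∈ 𝓝 x, ∀ y ∈ Nx, y ∉ frontier Z →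
      DifferentiableAt ℝ (signedDistFn Z) y →
      (fderiv ℝ (signedDistFn Z) y) v ≤ -ε := by
  have hx' := frontier_eq_closure_inter_closure (s := Z) ▸ hx
  have hxZ : x ∈ Z := hZ.closure_eq ▸ hx'.1
  have hxC : x ∈ closure Zᶜ := hx'.2
  have hε4 : (0:ℝ) < ε/4 := by linarith
  refine ⟨ball x (ε/4), ball_mem_nhds x hε4, ?_⟩
  intro y hy hyf hdiff
  have key : ∃ t₀ > 0, ∀ t, 0 < t → t < t₀ →
      signedDistFn Z (y + t • v) ≤ signedDistFn Z y - ε * t := by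
    by_cases hyZ : y ∈ Z
    · have hyI : y ∈ interior Z := by
        by_contra hI
        exact hyf (hZ.frontier_eq ▸ ⟨hyZ, hI⟩)
      have hA : (0:ℝ) < ε + ‖v‖ + 1 := by positivity
      refine ⟨min ε (ε/(2*(ε+‖v‖+1))), lt_min hε (by positivity), fun t ht0 htlt => ?_⟩
      have hl1 := lt_of_lt_of_le htlt (min_le_left _ _)
      have hl2 := lt_of_lt_of_le htlt (min_le_right _ _)
      refine decrease_inside hZ hxZ hxC hε h1 h2 hy hyI ht0 (le_of_lt hl1) ?_
      rw [lt_div_iff₀ (by positivity)] at hl2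
      nlinarith [norm_nonneg v]
    · have dpos : 0 < infDist y Z := (hZ.notMem_iff_infDist_pos ⟨x, hxZ⟩).mp hyZ
      refine ⟨min ε (infDist y Z / ε), lt_min hε (div_pos dpos hε), fun t ht0 htlt => ?_⟩
      have hl1 := lt_of_lt_of_le htlt (min_le_left _ _)
      have hl2 := lt_of_lt_of_le htlt (min_le_right _ _)
      rw [lt_div_iff₀ hε] at hl2
      exact decrease_outside hZ hxZ hε h1 hy hyZ ht0 (le_of_lt hl1)
        (le_of_lt (by linarith [hl2]))
  obtain ⟨t₀, ht₀, hkey⟩ := key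
  set g : ℝ → ℝ := fun t => signedDistFn Z (y + t • v) with hg
  have hcder : HasDerivAt (fun t : ℝ => y + t • v) v 0 := by
    simpa using ((hasDerivAt_id (0:ℝ)).smul_const v).const_add y
  have hder : HasDerivAt g ((fderiv ℝ (signedDistFn Z) y) v) 0 := by
    have hf : HasFDerivAt (signedDistFn Z) (fderiv ℝ (signedDistFn Z) y)
        ((fun t : ℝ => y + t • v) 0) := by simpa using hdiff.hasFDerivAt
    have := hf.comp_hasDerivAt 0 hcder
    exact this
  have hslope : Tendsto (slope g 0) (𝓝[>] 0) (𝓝 ((fderiv ℝ (signedDistFn Z) y) v)) :=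
    (hasDerivAt_iff_tendsto_slope.mp hder).mono_left
      (nhdsWithin_mono 0 fun t ht => ht.ne')
  refine le_of_tendsto hslope ?_
  filter_upwards [Ioo_mem_nhdsGT_of_mem ⟨le_refl (0:ℝ), ht₀⟩] with t ht
  have hb := hkey t ht.1 ht.2
  have hg0 : g 0 = signedDistFn Z y := by simp [hg]
  rw [slope_def_field, hg0, sub_zero, div_le_iff₀ ht.1]
  linarith
end
end

section
/- Let S ⊆ ℝ^d be a closed set, x ∈ ∂S, and suppose S is wedged at x. Let K ⊆ ℝ^d be nonempty, compact and convex. Then the following are equivalent: (a) for every p ∈ N_S^C(x) ∖ {0} there exists v ∈ K with ⟨v, p⟩ < 0; (b) K ∩ interior(T_S^C(x)) ≠ ∅. -/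
open Set Metric Filter Topology MeasureTheory
open scoped Pointwise

noncomputable section

/-- Signed distance function of a closed set. -/
def signedDist' {d : ℕ} (Z : Set (Euc d)) (x : Euc d) : ℝ :=
  infDist x Z - infDist x (closure Zᶜ)

section AuxInwardness

/-- Convex hull of a compact set in `ℝ^d` is compact (Carathéodory). -/
lemma aux_isCompact_convexHull {d : ℕ} {s : Set (Euc d)} (hs : IsCompact s) :
    IsCompact (convexHull ℝ s) := by
  classical
  rcases s.eq_empty_or_nonempty with rfl | ⟨s0, hs0⟩
  · simpa [convexHull_empty] using isCompact_empty
  set n := d + 1 with hn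
  have key : convexHull ℝ s =
      (fun q : (Fin n → ℝ) × (Fin n → Euc d) => ∑ j, q.1 j • q.2 j) ''
        (stdSimplex ℝ (Fin n) ×ˢ Set.pi Set.univ fun _ : Fin n => s) := by
    apply Set.Subset.antisymm
    · intro p hp
      obtain ⟨ι, hι, z, w, hzs, hai, hw0, hw1, hwz⟩ := eq_pos_convex_span_of_mem_convexHull hp
      have hcard : Fintype.card ι ≤ n := by
        have h1 := hai.card_le_finrank_succ
        have h2 : Module.finrank ℝ ↥(vectorSpan ℝ (Set.range z)) ≤ Module.finrank ℝ (Euc d) :=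
          Submodule.finrank_le _
        have h3 : Module.finrank ℝ (Euc d) = d := finrank_euclideanSpace_fin
        omega
      set m := Fintype.card ι with hm
      let e := Fintype.equivFin ι
      set W : ℕ → ℝ := fun j => if h : j < m then w (e.symm ⟨j, h⟩) else 0 with hW
      set Z : ℕ → Euc d := fun j => if h : j < m then z (e.symm ⟨j, h⟩) else s0 with hZ
      have hpad : ∀ (F : Type) (inst : AddCommMonoid F) (g : ℕ → F),
          (∀ j, m ≤ j → g j = 0) → (∑ j : Fin n, g j) = ∑ j : Fin m, g j := by
        intro F inst g hg
        rw [Fin.sum_univ_eq_sum_range g n, Fin.sum_univ_eq_sum_range g m]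
        exact (Finset.sum_subset (Finset.range_subset_range.2 hcard)
          (fun j _ hj => hg j (by simpa using hj))).symm
      refine ⟨⟨fun j => W j, fun j => Z j⟩, ⟨⟨fun j => ?_, ?_⟩, fun j _ => ?_⟩, ?_⟩
      · by_cases h : (j : ℕ) < m
        · simp only [hW, dif_pos h]; exact (hw0 _).le
        · simp only [hW, dif_neg h]; exact le_refl 0
      · have h1 : (∑ j : Fin n, W j) = ∑ j : Fin m, W j :=
          hpad ℝ _ W (fun j hj => by simp only [hW, dif_neg (Nat.not_lt.2 hj)])
        have h2 : ∀ j : Fin m, W j = w (e.symm j) := by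
          intro j
          simp only [hW, dif_pos j.isLt, Fin.eta]
        calc (∑ j : Fin n, W j) = ∑ j : Fin m, W j := h1
          _ = ∑ j : Fin m, w (e.symm j) := Finset.sum_congr rfl fun j _ => h2 j
          _ = ∑ i : ι, w i := Equiv.sum_comp e.symm w
          _ = 1 := hw1
      · by_cases h : (j : ℕ) < m
        · simp only [hZ, dif_pos h]; exact hzs ⟨_, rfl⟩
        · simp only [hZ, dif_neg h]; exact hs0
      · show (∑ j : Fin n, W j • Z j) = p
        have h1 : (∑ j : Fin n, W j • Z j) = ∑ j : Fin m, W j • Z j :=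
          hpad (Euc d) _ (fun j => W j • Z j)
            (fun j hj => by simp only [hW, dif_neg (Nat.not_lt.2 hj), zero_smul])
        have h2 : ∀ j : Fin m, W j • Z j = w (e.symm j) • z (e.symm j) := by
          intro j
          simp only [hW, hZ, dif_pos j.isLt, Fin.eta]
        calc (∑ j : Fin n, W j • Z j) = ∑ j : Fin m, W j • Z j := h1
          _ = ∑ j : Fin m, w (e.symm j) • z (e.symm j) := Finset.sum_congr rfl fun j _ => h2 j
          _ = ∑ i : ι, w i • z i := Equiv.sum_comp e.symm (fun i => w i • z i)
          _ = p := hwz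
    · rintro p ⟨⟨w, z⟩, ⟨hw, hz⟩, rfl⟩
      exact (convex_convexHull ℝ s).sum_mem (fun j _ => hw.1 j) hw.2
        (fun j _ => subset_convexHull ℝ s (hz j (Set.mem_univ j)))
  rw [key]
  exact (((isCompact_stdSimplex (𝕜 := ℝ) (ι := Fin n)).prod (isCompact_univ_pi fun _ => hs)).image
    (by fun_prop))

/-- The separation core: if `N` is a closed convex cone with polar `T` having nonempty
interior, and every nonzero `p ∈ N` is strictly opposed by some `v ∈ K`, then `K` meets
the interior of `T`. -/
lemma aux_core_sep {d : ℕ} {N K : Set (Euc d)}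
    (hNconv : Convex ℝ N) (hNclosed : IsClosed N) (hN0 : (0 : Euc d) ∈ N)
    (hNsmul : ∀ t : ℝ, 0 < t → ∀ p ∈ N, t • p ∈ N)
    (hKne : K.Nonempty) (hKconv : Convex ℝ K)
    {T : Set (Euc d)} (hT : T = {v : Euc d | ∀ p ∈ N, (inner ℝ p v : ℝ) ≤ 0})
    (hint : (interior T).Nonempty)
    (ha : ∀ p ∈ N, p ≠ 0 → ∃ v ∈ K, (inner ℝ v p : ℝ) < 0) :
    (K ∩ interior T).Nonempty := by
  subst hT
  set T : Set (Euc d) := {v : Euc d | ∀ p ∈ N, (inner ℝ p v : ℝ) ≤ 0} with hTdef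
  have hT0 : (0 : Euc d) ∈ T := by
    intro p _; simp
  have hTconv : Convex ℝ T := by
    intro v₁ h₁ v₂ h₂ a b ha' hb' hab p hp
    have e1 := h₁ p hp
    have e2 := h₂ p hp
    rw [inner_add_right, real_inner_smul_right, real_inner_smul_right]
    nlinarith
  have hTsmul : ∀ t : ℝ, 0 < t → ∀ v ∈ T, t • v ∈ T := by
    intro t ht v hv p hp
    have := hv p hp
    rw [real_inner_smul_right]
    exact mul_nonpos_of_nonneg_of_nonpos ht.le this
  by_contra hcon
  have hdisj : Disjoint (interior T) K := by
    rw [Set.disjoint_iff_inter_eq_empty, Set.inter_comm]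
    exact Set.not_nonempty_iff_eq_empty.1 hcon
  obtain ⟨f, u, hfa, hfb⟩ :=
    geometric_hahn_banach_open (hTconv.interior) isOpen_interior hKconv hdisj
  obtain ⟨w₀, hw₀⟩ := hint
  have hkey : ∀ t : ℝ, 0 < t → t ≤ 1 → t * f w₀ < u := by
    intro t ht ht1
    have hmem : t • w₀ + (1 - t) • (0 : Euc d) ∈ interior T :=
      hTconv.combo_interior_self_mem_interior hw₀ hT0 ht (by linarith) (by ring)
    have := hfa _ (by simpa using hmem)
    simpa [_root_.map_smul, smul_eq_mul] using this
  have hu0 : 0 ≤ u := by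
    by_contra h
    push_neg at h
    have hfw : f w₀ < u := by simpa using hkey 1 one_pos le_rfl
    have hfw0 : f w₀ < 0 := lt_trans hfw h
    set t := u / (2 * f w₀) with htdef
    have ht : 0 < t := div_pos_of_neg_of_neg h (by linarith)
    have ht1 : t ≤ 1 := by
      rw [div_le_one_iff]
      right; right
      constructor
      · linarith
      · linarith
    have htf : t * f w₀ = u / 2 := by
      have hne : f w₀ ≠ 0 := ne_of_lt hfw0
      rw [htdef]
      field_simp
    have := hkey t ht ht1
    rw [htf] at this
    linarith
  have hfu : ∀ v ∈ T, f v ≤ u := by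
    intro v hv
    have hlim : Tendsto (fun θ : ℝ => θ * f w₀ + (1 - θ) * f v) (𝓝[>] 0) (𝓝 (f v)) := by
      have hcont : Continuous fun θ : ℝ => θ * f w₀ + (1 - θ) * f v := by fun_prop
      have h0 : Tendsto (fun θ : ℝ => θ * f w₀ + (1 - θ) * f v) (𝓝[>] (0 : ℝ))
          (𝓝 (0 * f w₀ + (1 - 0) * f v)) :=
        (hcont.tendsto 0).mono_left nhdsWithin_le_nhds
      simpa using h0
    refine le_of_tendsto hlim ?_
    filter_upwards [Ioo_mem_nhdsGT_of_mem (Set.left_mem_Ico.2 zero_lt_one)] with θ hθ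
    have hmem : θ • w₀ + (1 - θ) • v ∈ interior T :=
      hTconv.combo_interior_self_mem_interior hw₀ hv hθ.1 (by linarith [hθ.2]) (by ring)
    have := hfa _ hmem
    simpa [map_add, _root_.map_smul, smul_eq_mul] using this.le
  have hfT : ∀ v ∈ T, f v ≤ 0 := by
    intro v hv
    by_contra h
    push_neg at h
    have := hfu _ (hTsmul ((u + 1) / f v) (by positivity) v hv)
    rw [_root_.map_smul, smul_eq_mul, div_mul_cancel₀ _ (ne_of_gt h)] at this
    linarith
  set q := (InnerProductSpace.toDual ℝ (Euc d)).symm f with hqdef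
  have hqy : ∀ y : Euc d, (inner ℝ q y : ℝ) = f y := fun y =>
    InnerProductSpace.toDual_symm_apply
  have hq0 : q ≠ 0 := by
    intro h
    obtain ⟨k₀, hk₀⟩ := hKne
    have h1 : f w₀ < u := by simpa using hkey 1 one_pos le_rfl
    have h2 : u ≤ f k₀ := hfb _ hk₀
    have hf0 : ∀ y : Euc d, f y = 0 := by
      intro y
      rw [← hqy y, h, inner_zero_left]
    rw [hf0 w₀] at h1
    rw [hf0 k₀] at h2
    linarith
  have hqN : q ∈ N := by
    by_contra hqN
    obtain ⟨g, u', hga, hgq⟩ := geometric_hahn_banach_closed_point hNconv hNclosed hqN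
    have hu' : 0 < u' := by
      have := hga 0 hN0
      rwa [_root_.map_zero] at this
    have hgN : ∀ p ∈ N, g p ≤ 0 := by
      intro p hp
      by_contra h
      push_neg at h
      have := hga _ (hNsmul ((u' + 1) / g p) (by positivity) p hp)
      rw [_root_.map_smul, smul_eq_mul, div_mul_cancel₀ _ (ne_of_gt h)] at this
      linarith
    set y := (InnerProductSpace.toDual ℝ (Euc d)).symm g with hydef
    have hyp : ∀ p : Euc d, (inner ℝ y p : ℝ) = g p := fun p =>
      InnerProductSpace.toDual_symm_apply
    have hyT : y ∈ T := by
      intro p hp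
      show (inner ℝ p y : ℝ) ≤ 0
      rw [real_inner_comm, hyp]
      exact hgN p hp
    have h1 : f y ≤ 0 := hfT y hyT
    have h2 : g q = f y := by
      rw [← hyp q, real_inner_comm, hqy]
    linarith
  obtain ⟨v, hvK, hvq⟩ := ha q hqN hq0
  have h3 : u ≤ f v := hfb v hvK
  rw [← hqy] at h3
  rw [real_inner_comm] at hvq
  linarith

end AuxInwardness

/-- **Equivalence (2.12) (restatement of (S2)).** For a closed set `S` wedged at `x ∈ ∂S` and a
nonempty compact convex set `K` (the velocity set `f(x,U)`), the following are equivalent: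
(a) for every `p ∈ N_S^C(x) ∖ {0}` some `v ∈ K` has `⟨v,p⟩ < 0`;
(b) `K` meets the interior of the Clarke tangent cone `T_S^C(x)`. -/
theorem inwardness_equivalence {d : ℕ} (S : Set (Euc d)) (hS : IsClosed S)
    (x : Euc d) (hx : x ∈ frontier S) (hw : WedgedAt S x)
    (K : Set (Euc d)) (hKne : K.Nonempty) (hKcomp : IsCompact K) (hKconv : Convex ℝ K) :
    (∀ p ∈ clarkeNormalCone S x, p ≠ 0 → ∃ v ∈ K, rinner v p < 0) ↔
      (K ∩ interior (clarkeTangentCone S x)).Nonempty := by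
  classical
  obtain ⟨k₀, hk₀⟩ := hKne
  set L := limProxDirs S x with hLdef
  set N := clarkeNormalCone S x with hNdef
  have hw' : N ∩ -N = {0} := hw
  have hrin : ∀ a b : Euc d, rinner a b = (inner ℝ a b : ℝ) := fun _ _ => rfl
  -- the easy direction (b) → (a)
  have dir2 : (K ∩ interior (clarkeTangentCone S x)).Nonempty →
      ∀ p ∈ N, p ≠ 0 → ∃ v ∈ K, rinner v p < 0 := by
    rintro ⟨v, hvK, hvint⟩ p hp hp0
    obtain ⟨ε, hε, hball⟩ := Metric.mem_nhds_iff.1 (mem_interior_iff_mem_nhds.1 hvint)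
    have hpnorm : 0 < ‖p‖ := norm_pos_iff.2 hp0
    set c : ℝ := ε / (2 * ‖p‖) with hcdef
    have hc : 0 < c := by positivity
    have hvmem : v + c • p ∈ clarkeTangentCone S x := by
      apply hball
      rw [mem_ball, dist_eq_norm]
      have h1 : v + c • p - v = c • p := by abel
      rw [h1, norm_smul, Real.norm_eq_abs, abs_of_pos hc, hcdef]
      rw [div_mul_eq_mul_div, mul_comm (2 : ℝ) ‖p‖, ← div_div,
        mul_div_assoc, div_self hpnorm.ne', mul_one]
      linarith
    have h1 : rinner p (v + c • p) ≤ 0 := hvmem p hp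
    rw [hrin] at h1
    have h2 : (inner ℝ p (v + c • p) : ℝ) = (inner ℝ p v : ℝ) + c * ‖p‖ ^ 2 := by
      rw [inner_add_right, real_inner_smul_right, real_inner_self_eq_norm_sq]
    refine ⟨v, hvK, ?_⟩
    rw [hrin, real_inner_comm]
    have hp2 : 0 < ‖p‖ ^ 2 := by positivity
    nlinarith [mul_pos hc hp2]
  rcases Set.eq_empty_or_nonempty L with hLe | hLne
  · -- degenerate case: no limiting proximal normal directions, `N = {0}`
    have hNzero : ∀ p ∈ N, p = 0 := by
      rintro p ⟨lam, hlam, ξ, hξ, rfl⟩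
      have hξ2 : ξ ∈ closure (convexHull ℝ ({0} ∪ L)) := hξ
      rw [hLe, Set.union_empty, convexHull_singleton, closure_singleton,
        Set.mem_singleton_iff] at hξ2
      rw [hξ2, smul_zero]
    have hTuniv : clarkeTangentCone S x = Set.univ := by
      apply Set.eq_univ_of_forall
      intro v p hp
      rw [hNzero p hp, hrin, inner_zero_left]
    constructor
    · intro _
      exact ⟨k₀, hk₀, by rw [hTuniv, interior_univ]; trivial⟩
    · intro _ p hp hp0
      exact absurd (hNzero p hp) hp0
  · -- main case
    set L' := closure L with hL'def
    have hLsph : L ⊆ sphere (0 : Euc d) 1 := fun v hv => by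
      rw [mem_sphere, dist_zero_right]; exact hv.1
    have hL'sph : L' ⊆ sphere (0 : Euc d) 1 := closure_minimal hLsph isClosed_sphere
    have hL'comp : IsCompact L' :=
      (isCompact_sphere (0 : Euc d) 1).of_isClosed_subset isClosed_closure hL'sph
    have hL'ne : L'.Nonempty := hLne.closure
    set M := convexHull ℝ L' with hMdef
    have hMne : M.Nonempty := hL'ne.mono (subset_convexHull ℝ L')
    have hMcomp : IsCompact M := aux_isCompact_convexHull hL'comp
    have hMconv : Convex ℝ M := convex_convexHull ℝ L'
    have hL'norm : ∀ c ∈ L', ‖c‖ = 1 := fun c hc => by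
      have := hL'sph hc; rwa [mem_sphere, dist_zero_right] at this
    have hMball : ∀ c ∈ M, ‖c‖ ≤ 1 := by
      intro c hc
      have : M ⊆ closedBall (0 : Euc d) 1 := by
        apply convexHull_min _ (convex_closedBall 0 1)
        intro v hv
        rw [mem_closedBall, dist_zero_right, hL'norm v hv]
      have := this hc
      rwa [mem_closedBall, dist_zero_right] at this
    -- structure of the closed convex hull
    have h0C : (0 : Euc d) ∈ closure (convexHull ℝ ({0} ∪ L)) :=
      subset_closure (subset_convexHull ℝ _ (Set.mem_union_left _ rfl))
    have hCC' : closure (convexHull ℝ ({0} ∪ L)) = convexHull ℝ (insert (0 : Euc d) L') := by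
      apply Set.Subset.antisymm
      · apply closure_minimal
        · apply convexHull_mono
          rw [Set.singleton_union]
          exact Set.insert_subset_insert subset_closure
        · exact (aux_isCompact_convexHull (hL'comp.insert 0)).isClosed
      · apply convexHull_min _ ((convex_convexHull ℝ _).closure)
        apply Set.insert_subset h0C
        exact (closure_mono ((Set.subset_union_right).trans (subset_convexHull ℝ _)))
    -- characterization of the normal cone
    have hNchar : ∀ p : Euc d, p ∈ N ↔ p = 0 ∨ ∃ t : ℝ, 0 < t ∧ ∃ c ∈ M, p = t • c := by
      intro p
      constructor
      · rintro ⟨lam, hlam, ξ, hξ, rfl⟩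
        rw [hCC', convexHull_insert hL'ne, mem_convexJoin] at hξ
        obtain ⟨a, ha, b, hb, hseg⟩ := hξ
        rw [Set.mem_singleton_iff] at ha
        subst ha
        rw [segment_eq_image] at hseg
        obtain ⟨θ, hθ, hξ'⟩ := hseg
        simp only [smul_zero, zero_add] at hξ'
        rcases eq_or_lt_of_le (mul_nonneg hlam hθ.1) with h | h
        · left
          rw [← hξ', smul_smul, ← h, zero_smul]
        · right
          exact ⟨lam * θ, h, b, hb, by rw [← hξ', smul_smul]⟩
      · rintro (rfl | ⟨t, ht, c, hc, rfl⟩)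
        · exact ⟨0, le_refl 0, 0, h0C, (zero_smul ℝ 0).symm⟩
        · refine ⟨t, ht.le, c, ?_, rfl⟩
          rw [hCC']
          exact convexHull_mono (Set.subset_insert 0 L') hc
    have hN0 : (0 : Euc d) ∈ N := (hNchar 0).2 (Or.inl rfl)
    have hNsmul : ∀ t : ℝ, 0 < t → ∀ p ∈ N, t • p ∈ N := by
      intro t ht p hp
      rcases (hNchar p).1 hp with rfl | ⟨s, hs, c, hc, rfl⟩
      · rw [smul_zero]; exact hN0
      · exact (hNchar _).2 (Or.inr ⟨t * s, mul_pos ht hs, c, hc, smul_smul t s c⟩)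
    have hNconv : Convex ℝ N := by
      intro p hp q hq a b ha' hb' hab
      rcases (hNchar p).1 hp with rfl | ⟨t₁, ht₁, c₁, hc₁, rfl⟩
      · rw [smul_zero, zero_add]
        rcases eq_or_lt_of_le hb' with h | h
        · rw [← h, zero_smul]; exact hN0
        · exact hNsmul b h q hq
      rcases (hNchar q).1 hq with rfl | ⟨t₂, ht₂, c₂, hc₂, rfl⟩
      · rw [smul_zero, add_zero]
        rcases eq_or_lt_of_le ha' with h | h
        · rw [← h, zero_smul]; exact hN0
        · exact hNsmul a h _ ((hNchar _).2 (Or.inr ⟨t₁, ht₁, c₁, hc₁, rfl⟩))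
      set s := a * t₁ + b * t₂ with hsdef
      have hat : 0 ≤ a * t₁ := mul_nonneg ha' ht₁.le
      have hbt : 0 ≤ b * t₂ := mul_nonneg hb' ht₂.le
      rcases eq_or_lt_of_le (add_nonneg hat hbt) with h | h
      · have h1 : a * t₁ = 0 := by linarith [hat, hbt]
        have h2 : b * t₂ = 0 := by linarith [hat, hbt]
        have : a • t₁ • c₁ + b • t₂ • c₂ = 0 := by
          rw [smul_smul, smul_smul, h1, h2, zero_smul, zero_smul, add_zero]
        rw [this]; exact hN0
      · refine (hNchar _).2 (Or.inr ⟨s, h, (a * t₁ / s) • c₁ + (b * t₂ / s) • c₂, ?_, ?_⟩)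
        · apply hMconv hc₁ hc₂ (div_nonneg hat h.le) (div_nonneg hbt h.le)
          field_simp
        · rw [smul_add, smul_smul, smul_smul, smul_smul, smul_smul,
            mul_div_cancel₀ _ h.ne', mul_div_cancel₀ _ h.ne']
    -- `0 ∉ M` by wedgedness
    have h0M : (0 : Euc d) ∉ M := by
      intro h0M
      rw [hMdef, convexHull_eq] at h0M
      obtain ⟨ι, t, w, z, hw0, hw1, hz, hcm⟩ := h0M
      have hsum : (∑ i ∈ t, w i • z i) = 0 := by
        rw [← Finset.centerMass_eq_of_sum_1 t z hw1, hcm]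
      obtain ⟨i₀, hi₀t, hwi₀⟩ : ∃ i ∈ t, w i ≠ 0 :=
        Finset.exists_ne_zero_of_sum_ne_zero (by rw [hw1]; exact one_ne_zero)
      have hwi₀pos : 0 < w i₀ := (hw0 i₀ hi₀t).lt_of_ne (Ne.symm hwi₀)
      have hz0norm : ‖z i₀‖ = 1 := hL'norm _ (hz i₀ hi₀t)
      set p := w i₀ • z i₀ with hpdef
      have hp0 : p ≠ 0 := by
        intro h
        rcases smul_eq_zero.1 h with h' | h'
        · exact hwi₀ h'
        · rw [h', norm_zero] at hz0norm; exact one_ne_zero hz0norm.symm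
      have hpN : p ∈ N := (hNchar p).2
        (Or.inr ⟨w i₀, hwi₀pos, z i₀, subset_convexHull ℝ L' (hz i₀ hi₀t), rfl⟩)
      have hrest : (∑ i ∈ t.erase i₀, w i • z i) = -p := by
        have h := Finset.add_sum_erase t (fun i => w i • z i) hi₀t
        rw [hsum] at h
        simpa [hpdef] using eq_neg_of_add_eq_zero_right h
      set s0 := ∑ i ∈ t.erase i₀, w i with hs0def
      have hs0nonneg : 0 ≤ s0 :=
        Finset.sum_nonneg fun i hi => hw0 i (Finset.mem_of_mem_erase hi)
      rcases eq_or_lt_of_le hs0nonneg with heq | hpos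
      · have hall : ∀ i ∈ t.erase i₀, w i = 0 := by
          intro i hi
          exact (Finset.sum_eq_zero_iff_of_nonneg
            (fun j hj => hw0 j (Finset.mem_of_mem_erase hj))).1 heq.symm i hi
        have : -p = 0 := by
          rw [← hrest]
          exact Finset.sum_eq_zero fun i hi => by rw [hall i hi, zero_smul]
        exact hp0 (by simpa [neg_eq_zero] using this)
      · have hcM : (s0⁻¹ • ∑ i ∈ t.erase i₀, w i • z i) ∈ M := by
          have := Finset.centerMass_mem_convexHull (t.erase i₀)
            (fun i hi => hw0 i (Finset.mem_of_mem_erase hi)) hpos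
            (fun i hi => hz i (Finset.mem_of_mem_erase hi))
          simpa [Finset.centerMass, hs0def] using this
        have hmpN : -p ∈ N := (hNchar (-p)).2 (Or.inr ⟨s0, hpos, _, hcM,
          ((smul_inv_smul₀ hpos.ne' _).trans hrest).symm⟩)
        have hmem : p ∈ N ∩ -N := ⟨hpN, by rwa [Set.mem_neg]⟩
        rw [hw'] at hmem
        exact hp0 hmem
    -- minimal norm on `M`
    obtain ⟨c₀, hc₀M, hc₀min⟩ := hMcomp.exists_isMinOn hMne continuous_norm.continuousOn
    set δ := ‖c₀‖ with hδdef
    have hδpos : 0 < δ := by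
      rw [hδdef, norm_pos_iff]
      intro h
      rw [h] at hc₀M
      exact h0M hc₀M
    have hδle : ∀ c ∈ M, δ ≤ ‖c‖ := fun c hc => hc₀min hc
    -- `N` is closed
    have hNclosed : IsClosed N := by
      apply isClosed_of_closure_subset
      intro p hp
      by_cases hp0 : p = 0
      · rw [hp0]; exact hN0
      set R := ‖p‖ + 1 with hRdef
      have hR : 0 < R := by positivity
      set Kc := (fun q : ℝ × Euc d => q.1 • q.2) '' (Icc (0 : ℝ) (R / δ) ×ˢ M) with hKcdef
      have hKcComp : IsCompact Kc := (isCompact_Icc.prod hMcomp).image continuous_smul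
      have hsub : N ∩ ball 0 R ⊆ Kc := by
        rintro q ⟨hqN, hqb⟩
        rcases (hNchar q).1 hqN with rfl | ⟨t, ht, c, hc, rfl⟩
        · exact ⟨(0, hMne.choose), ⟨⟨le_refl 0, by positivity⟩, hMne.choose_spec⟩,
            by simp⟩
        · refine ⟨(t, c), ⟨⟨ht.le, ?_⟩, hc⟩, rfl⟩
          have h1 : t * δ ≤ ‖t • c‖ := by
            rw [norm_smul, Real.norm_eq_abs, abs_of_pos ht]
            exact mul_le_mul_of_nonneg_left (hδle c hc) ht.le
          have h2 : ‖t • c‖ < R := by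
            rw [mem_ball, dist_zero_right] at hqb; exact hqb
          rw [le_div_iff₀ hδpos]
          linarith
      have hp2 : p ∈ closure (N ∩ ball 0 R) := by
        rw [_root_.mem_closure_iff] at hp ⊢
        intro o ho hpo
        have hpb : p ∈ ball (0 : Euc d) R := by
          rw [mem_ball, dist_zero_right, hRdef]; linarith
        obtain ⟨y, hyo, hyN⟩ := hp (o ∩ ball 0 R) (ho.inter isOpen_ball) ⟨hpo, hpb⟩
        exact ⟨y, hyo.1, hyN, hyo.2⟩
      have hpKc : p ∈ Kc := by
        have := (closure_mono hsub) hp2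
        rwa [hKcComp.isClosed.closure_eq] at this
      obtain ⟨⟨t, c⟩, ⟨⟨ht0, _⟩, hcM⟩, rfl⟩ := hpKc
      show t • c ∈ N
      rcases eq_or_lt_of_le ht0 with h | h
      · have h' : t = 0 := h.symm
        rw [h', zero_smul]; exact hN0
      · exact (hNchar _).2 (Or.inr ⟨t, h, c, hcM, rfl⟩)
    -- interior of the tangent cone is nonempty
    obtain ⟨f, u, hf0u, hfM⟩ :=
      geometric_hahn_banach_point_closed hMconv hMcomp.isClosed h0M
    have hu : 0 < u := by simpa using hf0u
    set q := (InnerProductSpace.toDual ℝ (Euc d)).symm f with hqdef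
    have hqy : ∀ y : Euc d, (inner ℝ q y : ℝ) = f y := fun y =>
      InnerProductSpace.toDual_symm_apply
    have hballT : ball (-q) u ⊆ clarkeTangentCone S x := by
      intro v hv p hp
      rw [hrin]
      rcases (hNchar p).1 hp with rfl | ⟨t, ht, c, hc, rfl⟩
      · rw [inner_zero_left]
      · rw [real_inner_smul_left]
        have h1 : (inner ℝ c v : ℝ) = (inner ℝ c (-q) : ℝ) + (inner ℝ c (v + q) : ℝ) := by
          rw [← inner_add_right]
          congr 1
          abel
        have h2 : (inner ℝ c (-q) : ℝ) = -f c := by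
          rw [inner_neg_right, real_inner_comm, hqy]
        have h3 : (inner ℝ c (v + q) : ℝ) ≤ ‖c‖ * ‖v + q‖ := real_inner_le_norm c _
        have h4 : ‖v + q‖ < u := by
          have := mem_ball.1 hv
          rwa [dist_eq_norm, sub_neg_eq_add] at this
        have h5 : ‖c‖ ≤ 1 := hMball c hc
        have h6 : u < f c := hfM c hc
        have h7 : (inner ℝ c v : ℝ) ≤ 0 := by
          nlinarith [norm_nonneg (v + q), norm_nonneg c]
        exact mul_nonpos_of_nonneg_of_nonpos ht.le h7
    have hint : (interior (clarkeTangentCone S x)).Nonempty :=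
      ⟨-q, mem_interior.2 ⟨ball (-q) u, hballT, isOpen_ball, mem_ball_self hu⟩⟩
    constructor
    · intro ha
      exact aux_core_sep hNconv hNclosed hN0 hNsmul ⟨k₀, hk₀⟩ hKconv rfl hint ha
    · exact dir2
end
end

section
/- Let S ⊆ ℝ^d be a closed set which is wedged at every point of its boundary, and let x ∈ ∂S. Then, writing S' = closure(ℝ^d ∖ S), one has N_S^C(x) = −N_{S'}^C(x) and T_S^C(x) = −T_{S'}^C(x). -/
open Set Metric Filter Topology MeasureTheory
open scoped Pointwise

noncomputable section

/-! ### Auxiliary development for `cones_of_complement` -/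

section ConesOfComplementProof

variable {d : ℕ}

/-- The (negative) polar of a set of vectors. -/
def cpPol (A : Set (Euc d)) : Set (Euc d) := {v | ∀ a ∈ A, inner ℝ a v ≤ (0 : ℝ)}

lemma cpPol_isClosed (A : Set (Euc d)) : IsClosed (cpPol A) := by
  have h : cpPol A = ⋂ a ∈ A, {v : Euc d | inner ℝ a v ≤ (0 : ℝ)} := by
    ext v; simp [cpPol]
  rw [h]
  exact isClosed_biInter fun a _ =>
    isClosed_le (Continuous.inner continuous_const continuous_id) continuous_const

lemma cpPol_anti {A B : Set (Euc d)} (h : A ⊆ B) : cpPol B ⊆ cpPol A :=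
  fun _ hv a ha => hv a (h ha)

lemma cpPol_neg (A : Set (Euc d)) : cpPol (-A) = -(cpPol A) := by
  ext v
  simp only [cpPol, Set.mem_neg, Set.mem_setOf_eq]
  constructor
  · intro hv a ha
    have := hv (-a) (by simpa using ha)
    simpa [inner_neg_left, inner_neg_right] using this
  · intro hv a ha
    have := hv (-a) ha
    simpa [inner_neg_left, inner_neg_right] using this

lemma limProx_norm {S : Set (Euc d)} {x ζ : Euc d} (h : ζ ∈ limProxDirs S x) : ‖ζ‖ = 1 := h.1

lemma zero_mem_cpC (S : Set (Euc d)) (x : Euc d) :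
    (0 : Euc d) ∈ closure (convexHull ℝ ({0} ∪ limProxDirs S x)) :=
  subset_closure (subset_convexHull ℝ _ (by simp))

lemma mem_N_of_mem_cpC {S : Set (Euc d)} {x ξ : Euc d}
    (h : ξ ∈ closure (convexHull ℝ ({0} ∪ limProxDirs S x))) : ξ ∈ clarkeNormalCone S x :=
  ⟨1, zero_le_one, ξ, h, (one_smul ℝ ξ).symm⟩

lemma limProx_subset_N (S : Set (Euc d)) (x : Euc d) :
    limProxDirs S x ⊆ clarkeNormalCone S x :=
  fun _ hζ => mem_N_of_mem_cpC (subset_closure (subset_convexHull ℝ _ (Or.inr hζ)))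

lemma zero_mem_N (S : Set (Euc d)) (x : Euc d) : (0 : Euc d) ∈ clarkeNormalCone S x :=
  mem_N_of_mem_cpC (zero_mem_cpC S x)

lemma N_smul_mem {S : Set (Euc d)} {x : Euc d} {c : ℝ} (hc : 0 ≤ c) {p : Euc d}
    (hp : p ∈ clarkeNormalCone S x) : c • p ∈ clarkeNormalCone S x := by
  obtain ⟨lam, hlam, ξ, hξ, rfl⟩ := hp
  exact ⟨c * lam, mul_nonneg hc hlam, ξ, hξ, smul_smul c lam ξ⟩

lemma inner_nonpos_on_cpC {S : Set (Euc d)} {x : Euc d} {v : Euc d}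
    (hv : v ∈ cpPol (limProxDirs S x)) :
    ∀ ξ ∈ closure (convexHull ℝ ({0} ∪ limProxDirs S x)), inner ℝ ξ v ≤ (0 : ℝ) := by
  have hlin : IsLinearMap ℝ (fun c : Euc d => (inner ℝ c v : ℝ)) :=
    ⟨fun a b => inner_add_left a b v, fun c a => by
      rw [real_inner_smul_left]; rfl⟩
  have hconv : Convex ℝ {c : Euc d | inner ℝ c v ≤ (0 : ℝ)} := convex_halfSpace_le hlin 0
  have hsub : {0} ∪ limProxDirs S x ⊆ {c : Euc d | inner ℝ c v ≤ (0 : ℝ)} := by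
    rintro c (hc | hc)
    · simp only [Set.mem_singleton_iff] at hc
      simp [hc]
    · exact hv c hc
  have hcl : IsClosed {c : Euc d | inner ℝ c v ≤ (0 : ℝ)} :=
    isClosed_le (Continuous.inner continuous_id continuous_const) continuous_const
  exact fun ξ hξ => closure_minimal (convexHull_min hsub hconv) hcl hξ

lemma cpPol_N_eq (S : Set (Euc d)) (x : Euc d) :
    cpPol (clarkeNormalCone S x) = cpPol (limProxDirs S x) := by
  apply subset_antisymm (cpPol_anti (limProx_subset_N S x))
  rintro v hv p ⟨lam, hlam, ξ, hξ, rfl⟩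
  have h1 : inner ℝ ξ v ≤ (0 : ℝ) := inner_nonpos_on_cpC hv ξ hξ
  have h2 : (inner ℝ (lam • ξ) v : ℝ) = lam * inner ℝ ξ v := real_inner_smul_left ξ v lam
  rw [h2]
  exact mul_nonpos_of_nonneg_of_nonpos hlam h1

lemma tangent_eq_cpPol (S : Set (Euc d)) (x : Euc d) :
    clarkeTangentCone S x = cpPol (clarkeNormalCone S x) := rfl

lemma N_subset_polpol (S : Set (Euc d)) (x : Euc d) :
    clarkeNormalCone S x ⊆ cpPol (cpPol (limProxDirs S x)) := by
  rintro p ⟨lam, hlam, ξ, hξ, rfl⟩ v hv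
  have h1 : inner ℝ ξ v ≤ (0 : ℝ) := inner_nonpos_on_cpC hv ξ hξ
  have h2 : (inner ℝ v (lam • ξ) : ℝ) = lam * inner ℝ ξ v := by
    rw [real_inner_comm]; exact real_inner_smul_left ξ v lam
  rw [h2]
  exact mul_nonpos_of_nonneg_of_nonpos hlam h1

lemma N_convex (S : Set (Euc d)) (x : Euc d) : Convex ℝ (clarkeNormalCone S x) := by
  rintro p ⟨l1, hl1, ξ1, hξ1, rfl⟩ q ⟨l2, hl2, ξ2, hξ2, rfl⟩ a b ha hb hab
  have hC : Convex ℝ (closure (convexHull ℝ ({0} ∪ limProxDirs S x))) :=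
    (convex_convexHull ℝ _).closure
  rcases eq_or_lt_of_le (by positivity : (0:ℝ) ≤ a * l1 + b * l2) with hμ | hμ
  · have h1 : a * l1 = 0 := by nlinarith [mul_nonneg ha hl1, mul_nonneg hb hl2]
    have h2 : b * l2 = 0 := by nlinarith [mul_nonneg ha hl1, mul_nonneg hb hl2]
    have : a • l1 • ξ1 + b • l2 • ξ2 = (0 : Euc d) := by
      rw [smul_smul, smul_smul, h1, h2, zero_smul, zero_smul, add_zero]
    rw [this]; exact zero_mem_N S x
  · refine ⟨a * l1 + b * l2, hμ.le,
      (a * l1 / (a * l1 + b * l2)) • ξ1 + (b * l2 / (a * l1 + b * l2)) • ξ2, ?_, ?_⟩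
    · refine hC hξ1 hξ2 (by positivity) (by positivity) ?_
      field_simp
    · rw [smul_add, smul_smul, smul_smul, smul_smul, smul_smul]
      congr 2 <;> field_simp

lemma wedged_pointed {S : Set (Euc d)} {x : Euc d} (h : WedgedAt S x) :
    ∀ p ∈ clarkeNormalCone S x, -p ∈ clarkeNormalCone S x → p = 0 := by
  intro p h1 h2
  have hm : p ∈ clarkeNormalCone S x ∩ -(clarkeNormalCone S x) := ⟨h1, Set.mem_neg.2 h2⟩
  rw [WedgedAt] at h
  rw [h] at hm
  exact hm

lemma polpol_subset_N {S : Set (Euc d)} {x : Euc d} (hN : IsClosed (clarkeNormalCone S x)) :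
    cpPol (cpPol (limProxDirs S x)) ⊆ clarkeNormalCone S x := by
  intro b hb
  by_contra hbN
  obtain ⟨f, u, hfa, hub⟩ := geometric_hahn_banach_closed_point (N_convex S x) hN hbN
  have hu0 : 0 < u := by have := hfa 0 (zero_mem_N S x); simpa using this
  have hfle : ∀ a ∈ clarkeNormalCone S x, f a ≤ 0 := by
    intro a ha
    by_contra hfa'
    push_neg at hfa'
    have hc : ((u + 1) / f a) • a ∈ clarkeNormalCone S x :=
      N_smul_mem (by positivity) ha
    have h2 := hfa _ hc
    rw [_root_.map_smul, smul_eq_mul, div_mul_cancel₀ _ hfa'.ne'] at h2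
    linarith
  set φ := (InnerProductSpace.toDual ℝ (Euc d)).symm f with hφ
  have hφapp : ∀ y : Euc d, (inner ℝ φ y : ℝ) = f y := fun y =>
    InnerProductSpace.toDual_symm_apply
  have hφpol : φ ∈ cpPol (limProxDirs S x) := fun ζ hζ => by
    rw [real_inner_comm, hφapp]
    exact hfle ζ (limProx_subset_N S x hζ)
  have hfinal := hb φ hφpol
  rw [hφapp] at hfinal
  linarith

end ConesOfComplementProof

section ConesOfComplementProof2

variable {d : ℕ}

lemma cp_sum_pad {M : Type} [AddCommMonoid M] {c n : ℕ} (hc : c ≤ n) (v : Fin c → M) :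
    (∑ i : Fin n, if h : (i : ℕ) < c then v ⟨i, h⟩ else 0) = ∑ j : Fin c, v j := by
  have h1 : (∑ i : Fin n, if h : (i : ℕ) < c then v ⟨i, h⟩ else 0)
      = ∑ k ∈ Finset.range n, (if h : k < c then v ⟨k, h⟩ else 0) :=
    Fin.sum_univ_eq_sum_range (fun k => if h : k < c then v ⟨k, h⟩ else 0) n
  have h2 : (∑ k ∈ Finset.range c, if h : k < c then v ⟨k, h⟩ else 0)
      = ∑ k ∈ Finset.range n, (if h : k < c then v ⟨k, h⟩ else 0) := by
    apply Finset.sum_subset (Finset.range_subset_range.2 hc)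
    intro k _ hk
    rw [Finset.mem_range] at hk
    exact dif_neg hk
  have h3 : (∑ k ∈ Finset.range c, if h : k < c then v ⟨k, h⟩ else 0) = ∑ j : Fin c, v j := by
    rw [← Fin.sum_univ_eq_sum_range (fun k => if h : k < c then v ⟨k, h⟩ else 0) c]
    apply Finset.sum_congr rfl
    intro j _
    exact dif_pos j.2
  rw [h1, ← h2, h3]

lemma cp_isCompact_convexHull {Q : Set (Euc d)} (hQ : IsCompact Q) :
    IsCompact (convexHull ℝ Q) := by
  rcases Q.eq_empty_or_nonempty with h | ⟨q₀, hq₀⟩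
  · simp [h]
  · set n := d + 1 with hn
    have himg : convexHull ℝ Q =
        (fun p : (Fin n → ℝ) × (Fin n → Euc d) => ∑ i, p.1 i • p.2 i) ''
          ((stdSimplex ℝ (Fin n)) ×ˢ (Set.univ.pi fun _ : Fin n => Q)) := by
      apply subset_antisymm
      · intro p hp
        obtain ⟨ι, hfin, z, w, hrange, hindep, hpos, hsum, hx⟩ :=
          eq_pos_convex_span_of_mem_convexHull hp
        have hcard : Fintype.card ι ≤ n := by
          have h1 := hindep.card_le_finrank_succ
          have h2 : Module.finrank ℝ (vectorSpan ℝ (Set.range z)) ≤ Module.finrank ℝ (Euc d) :=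
            Submodule.finrank_le _
          have h3 : Module.finrank ℝ (Euc d) = d := finrank_euclideanSpace_fin
          omega
        set c := Fintype.card ι with hcdef
        set e := Fintype.equivFin ι with he
        refine ⟨(fun i : Fin n => if h : (i : ℕ) < c then w (e.symm ⟨i, h⟩) else 0,
                 fun i : Fin n => if h : (i : ℕ) < c then z (e.symm ⟨i, h⟩) else q₀),
                ⟨⟨?_, ?_⟩, ?_⟩, ?_⟩
        · intro i; dsimp only; split
          · exact (hpos _).le
          · exact le_refl 0
        · dsimp only
          rw [cp_sum_pad hcard (fun j => w (e.symm j)), Equiv.sum_comp e.symm w]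
          exact hsum
        · intro i _
          dsimp only; split
          · exact hrange (Set.mem_range_self _)
          · exact hq₀
        · dsimp only
          have hcong : ∀ i : Fin n,
              (if h : (i : ℕ) < c then w (e.symm ⟨i, h⟩) else 0) •
                (if h : (i : ℕ) < c then z (e.symm ⟨i, h⟩) else q₀)
              = (if h : (i : ℕ) < c then w (e.symm ⟨i, h⟩) • z (e.symm ⟨i, h⟩) else 0) := by
            intro i; by_cases h : (i : ℕ) < c <;> simp [h]
          rw [Finset.sum_congr rfl (fun i _ => hcong i),
            cp_sum_pad hcard (fun j => w (e.symm j) • z (e.symm j)),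
            Equiv.sum_comp e.symm (fun j => w j • z j)]
          exact hx
      · rintro p ⟨⟨w, z⟩, ⟨hw, hz⟩, rfl⟩
        have hcm := Finset.centerMass_mem_convexHull (Finset.univ) (fun i _ => hw.1 i)
          (by rw [hw.2]; exact one_pos) (fun i (_ : i ∈ Finset.univ) => hz i (Set.mem_univ i))
        rwa [Finset.centerMass_eq_of_sum_1 _ _ hw.2] at hcm
    rw [himg]
    exact ((isCompact_stdSimplex (𝕜 := ℝ) (ι := Fin n)).prod (isCompact_univ_pi fun _ => hQ)).image
      (by fun_prop)

end ConesOfComplementProof2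

section ConesOfComplementProof3

variable {d : ℕ}

lemma cpQ_subset_sphere (S : Set (Euc d)) (x : Euc d) :
    closure (limProxDirs S x) ⊆ sphere (0 : Euc d) 1 := by
  apply closure_minimal ?_ isClosed_sphere
  intro ζ hζ
  simpa [mem_sphere_iff_norm] using hζ.1

lemma cpQ_isCompact (S : Set (Euc d)) (x : Euc d) :
    IsCompact (closure (limProxDirs S x)) :=
  (isCompact_sphere (0 : Euc d) 1).of_isClosed_subset isClosed_closure (cpQ_subset_sphere S x)

lemma cpB_subset_cpC (S : Set (Euc d)) (x : Euc d) :
    convexHull ℝ (closure (limProxDirs S x)) ⊆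
      closure (convexHull ℝ ({0} ∪ limProxDirs S x)) := by
  apply convexHull_min ?_ ((convex_convexHull ℝ _).closure)
  exact closure_mono ((Set.subset_union_right).trans (subset_convexHull ℝ _))

lemma zero_not_mem_B {S : Set (Euc d)} {x : Euc d}
    (hp : ∀ p ∈ clarkeNormalCone S x, -p ∈ clarkeNormalCone S x → p = 0) :
    (0 : Euc d) ∉ convexHull ℝ (closure (limProxDirs S x)) := by
  classical
  intro h0
  obtain ⟨ι, hfin, z, w, hrange, hindep, hpos, hsum, hzero⟩ :=
    eq_pos_convex_span_of_mem_convexHull h0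
  have hnorm1 : ∀ i, ‖z i‖ = 1 := fun i => by
    have := cpQ_subset_sphere S x (hrange (Set.mem_range_self i))
    simpa [mem_sphere_iff_norm] using this
  have hne : Nonempty ι := by
    rcases isEmpty_or_nonempty ι with he | hne
    · rw [Finset.univ_eq_empty, Finset.sum_empty] at hsum; norm_num at hsum
    · exact hne
  obtain ⟨j⟩ := hne
  set s := ∑ i ∈ Finset.univ.erase j, w i with hs
  have hsplit : w j • z j + ∑ i ∈ Finset.univ.erase j, w i • z i = 0 := by
    rw [Finset.add_sum_erase Finset.univ (fun i => w i • z i) (Finset.mem_univ j)]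
    exact hzero
  have hsnn : 0 ≤ s := Finset.sum_nonneg fun i _ => (hpos i).le
  rcases eq_or_lt_of_le hsnn with hs0 | hs0
  · have hz0 : ∀ i ∈ Finset.univ.erase j, w i • z i = 0 := by
      intro i hi
      have hwi : w i = 0 :=
        (Finset.sum_eq_zero_iff_of_nonneg (fun i _ => (hpos i).le)).1 hs0.symm i hi
      rw [hwi, zero_smul]
    rw [Finset.sum_eq_zero hz0, add_zero] at hsplit
    have hzj : z j = 0 := (smul_eq_zero.1 hsplit).resolve_left (ne_of_gt (hpos j))
    have := hnorm1 j
    rw [hzj, norm_zero] at this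
    norm_num at this
  · set u := (Finset.univ.erase j).centerMass w z with hu
    have huB : u ∈ convexHull ℝ (closure (limProxDirs S x)) :=
      Finset.centerMass_mem_convexHull _ (fun i _ => (hpos i).le) hs0
        (fun i _ => hrange (Set.mem_range_self i))
    have hsum_erase : ∑ i ∈ Finset.univ.erase j, w i • z i = s • u := by
      rw [hu, Finset.centerMass, ← hs, smul_inv_smul₀ hs0.ne']
    rw [hsum_erase] at hsplit
    have h1 : z j ∈ clarkeNormalCone S x := mem_N_of_mem_cpC
      ((closure_mono ((Set.subset_union_right).trans (subset_convexHull ℝ _)))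
        (hrange (Set.mem_range_self j)))
    have hwjzj : w j • z j = -(s • u) := eq_neg_of_add_eq_zero_left hsplit
    have hnegzj : -(z j) = ((w j)⁻¹ * s) • u := by
      have hzj : z j = (w j)⁻¹ • (w j • z j) := (inv_smul_smul₀ (hpos j).ne' _).symm
      rw [hzj, hwjzj, smul_neg, neg_neg, smul_smul]
    have h2 : -(z j) ∈ clarkeNormalCone S x := by
      rw [hnegzj]
      exact ⟨(w j)⁻¹ * s, le_of_lt (mul_pos (inv_pos.2 (hpos j)) hs0), u, cpB_subset_cpC S x huB, rfl⟩
    have hzj0 := hp (z j) h1 h2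
    have := hnorm1 j
    rw [hzj0, norm_zero] at this
    norm_num at this

lemma cpC_decomp (S : Set (Euc d)) (x : Euc d) {ξ : Euc d}
    (hξ : ξ ∈ closure (convexHull ℝ ({0} ∪ limProxDirs S x))) :
    ξ = 0 ∨ ∃ s : ℝ, 0 < s ∧ s ≤ 1 ∧
      ∃ u ∈ convexHull ℝ (closure (limProxDirs S x)), ξ = s • u := by
  rcases (closure (limProxDirs S x)).eq_empty_or_nonempty with hQ | hQne
  · left
    have hP : limProxDirs S x = ∅ := Set.eq_empty_of_subset_empty (hQ ▸ subset_closure)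
    rw [hP] at hξ
    simpa [convexHull_singleton] using hξ
  · obtain ⟨q₁, hq₁⟩ := hQne
    set B := convexHull ℝ (closure (limProxDirs S x)) with hB
    have hBconv : Convex ℝ B := convex_convexHull ℝ _
    have hq₁B : q₁ ∈ B := subset_convexHull ℝ _ hq₁
    have hBcpt : IsCompact B := cp_isCompact_convexHull (cpQ_isCompact S x)
    set J := (fun p : ℝ × Euc d => p.1 • p.2) '' ((Icc (0:ℝ) 1) ×ˢ B) with hJ
    have hJcpt : IsCompact J := (isCompact_Icc.prod hBcpt).image (by fun_prop)
    have hJconv : Convex ℝ J := by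
      rintro p₁ ⟨⟨s₁, u₁⟩, ⟨hs₁, hu₁⟩, rfl⟩ p₂ ⟨⟨s₂, u₂⟩, ⟨hs₂, hu₂⟩, rfl⟩ a b ha hb hab
      simp only [Set.mem_Icc] at hs₁ hs₂
      dsimp only
      rcases eq_or_lt_of_le (show (0:ℝ) ≤ a * s₁ + b * s₂ by
          have := hs₁.1; have := hs₂.1; positivity) with hσ | hσ
      · have h1 : a * s₁ = 0 := by
          nlinarith [mul_nonneg ha hs₁.1, mul_nonneg hb hs₂.1]
        have h2 : b * s₂ = 0 := by
          nlinarith [mul_nonneg ha hs₁.1, mul_nonneg hb hs₂.1]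
        have hzero : a • s₁ • u₁ + b • s₂ • u₂ = (0 : Euc d) := by
          rw [smul_smul, smul_smul, h1, h2, zero_smul, zero_smul, add_zero]
        rw [hzero]
        exact ⟨(0, q₁), ⟨by simp [Set.mem_Icc], hq₁B⟩, by simp⟩
      · refine ⟨(a * s₁ + b * s₂,
          (a * s₁ / (a * s₁ + b * s₂)) • u₁ + (b * s₂ / (a * s₁ + b * s₂)) • u₂),
          ⟨?_, ?_⟩, ?_⟩
        · simp only [Set.mem_Icc]
          constructor
          · exact hσ.le
          · nlinarith [hs₁.2, hs₂.2]
        · exact hBconv hu₁ hu₂ (div_nonneg (mul_nonneg ha hs₁.1) hσ.le) (div_nonneg (mul_nonneg hb hs₂.1) hσ.le) (by field_simp)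
        · dsimp only
          rw [smul_add, smul_smul, smul_smul, smul_smul, smul_smul]
          congr 2 <;> field_simp
    have hsub : {0} ∪ limProxDirs S x ⊆ J := by
      rintro cξ (hc | hc)
      · simp only [Set.mem_singleton_iff] at hc
        exact ⟨(0, q₁), ⟨by simp [Set.mem_Icc], hq₁B⟩, by simp [hc]⟩
      · exact ⟨(1, cξ), ⟨by simp [Set.mem_Icc],
          subset_convexHull ℝ _ (subset_closure hc)⟩, by simp⟩
    have hCJ := closure_minimal (convexHull_min hsub hJconv) hJcpt.isClosed
    obtain ⟨⟨s, u⟩, ⟨hsI, huB⟩, hξeq⟩ := hCJ hξ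
    simp only [Set.mem_Icc] at hsI
    rcases eq_or_lt_of_le hsI.1 with hs0 | hs0
    · left; rw [← hξeq]; dsimp only; rw [← hs0, zero_smul]
    · right; exact ⟨s, hs0, hsI.2, u, huB, hξeq.symm⟩

lemma N_isClosed {S : Set (Euc d)} {x : Euc d}
    (hp : ∀ p ∈ clarkeNormalCone S x, -p ∈ clarkeNormalCone S x → p = 0) :
    IsClosed (clarkeNormalCone S x) := by
  have h0B := zero_not_mem_B hp
  rcases (closure (limProxDirs S x)).eq_empty_or_nonempty with hQ | hQne
  · have hNeq : clarkeNormalCone S x = {0} := by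
      apply subset_antisymm
      · rintro p ⟨lam, hlam, ξ, hξ, rfl⟩
        rcases cpC_decomp S x hξ with h | ⟨s, _, _, u, hu, _⟩
        · simp [h]
        · exact absurd hu (by rw [hQ]; simp)
      · rintro p hp'
        simp only [Set.mem_singleton_iff] at hp'
        rw [hp']; exact zero_mem_N S x
    rw [hNeq]; exact isClosed_singleton
  · set B := convexHull ℝ (closure (limProxDirs S x)) with hB
    have hBcpt : IsCompact B := cp_isCompact_convexHull (cpQ_isCompact S x)
    have hBne : B.Nonempty := hQne.mono (subset_convexHull ℝ _)
    obtain ⟨u₀, hu₀B, hmin⟩ := hBcpt.exists_isMinOn hBne continuous_norm.continuousOn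
    have hu₀ne : u₀ ≠ 0 := fun h => h0B (h ▸ hu₀B)
    have hm0 : 0 < ‖u₀‖ := norm_pos_iff.2 hu₀ne
    have hmB : ∀ u ∈ B, ‖u₀‖ ≤ ‖u‖ := fun u hu => hmin hu
    apply isClosed_of_closure_subset
    intro p hpcl
    rcases eq_or_ne p 0 with rfl | hpne
    · exact zero_mem_N S x
    obtain ⟨sq, hsqmem, hsqlim⟩ := mem_closure_iff_seq_limit.1 hpcl
    obtain ⟨b₀, hb₀⟩ := hBne
    have hstruct : ∀ k : ℕ, ∃ μ : ℝ, 0 ≤ μ ∧ ∃ u, u ∈ B ∧ sq k = μ • u := by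
      intro k
      obtain ⟨lam, hlam, ξ, hξ, hEq⟩ := hsqmem k
      rcases cpC_decomp S x hξ with h | ⟨s, hs0, hs1, u, hu, rfl⟩
      · exact ⟨0, le_rfl, b₀, hb₀, by rw [hEq, h, smul_zero, zero_smul]⟩
      · exact ⟨lam * s, by positivity, u, hu, by rw [hEq, smul_smul]⟩
    choose μ hμ0 u huB hsqEq using hstruct
    obtain ⟨ub, hubB, φ, hφ, hulim⟩ := hBcpt.tendsto_subseq huB
    have hunz : ∀ k, ‖u k‖ ≠ 0 := fun k => (lt_of_lt_of_le hm0 (hmB _ (huB k))).ne'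
    have hμeq : ∀ k, μ k = ‖sq k‖ / ‖u k‖ := by
      intro k
      rw [hsqEq k, norm_smul, Real.norm_of_nonneg (hμ0 k), mul_div_assoc,
        div_self (hunz k), mul_one]
    have hublim : Tendsto (fun k => ‖u (φ k)‖) atTop (𝓝 ‖ub‖) := hulim.norm
    have hubne : ‖ub‖ ≠ 0 := (lt_of_lt_of_le hm0 (hmB _ hubB)).ne'
    have hsqφ : Tendsto (fun k => sq (φ k)) atTop (𝓝 p) := hsqlim.comp hφ.tendsto_atTop
    have hμlim : Tendsto (fun k => μ (φ k)) atTop (𝓝 (‖p‖ / ‖ub‖)) := by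
      have h' : Tendsto (fun k => ‖sq (φ k)‖ / ‖u (φ k)‖) atTop (𝓝 (‖p‖ / ‖ub‖)) :=
        (hsqφ.norm).div hublim hubne
      exact h'.congr fun k => (hμeq (φ k)).symm
    have hprodlim : Tendsto (fun k => μ (φ k) • u (φ k)) atTop (𝓝 ((‖p‖ / ‖ub‖) • ub)) :=
      hμlim.smul hulim
    have hpeq : p = (‖p‖ / ‖ub‖) • ub := by
      apply tendsto_nhds_unique ?_ hprodlim
      exact hsqφ.congr fun k => (hsqEq (φ k))
    exact ⟨‖p‖ / ‖ub‖, by positivity, ub, cpB_subset_cpC S x hubB, hpeq⟩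

lemma exists_margin {S : Set (Euc d)} {x : Euc d}
    (h0B : (0 : Euc d) ∉ convexHull ℝ (closure (limProxDirs S x))) :
    ∃ v : Euc d, ∃ δ : ℝ, 0 < δ ∧ ∀ ζ ∈ limProxDirs S x, inner ℝ ζ v ≤ -δ := by
  rcases (closure (limProxDirs S x)).eq_empty_or_nonempty with hQ | hQne
  · have hP : limProxDirs S x = ∅ := Set.eq_empty_of_subset_empty (hQ ▸ subset_closure)
    refine ⟨0, 1, one_pos, ?_⟩
    rw [hP]; rintro ζ ⟨⟩
  · set B := convexHull ℝ (closure (limProxDirs S x)) with hB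
    have hBcpt : IsCompact B := cp_isCompact_convexHull (cpQ_isCompact S x)
    have hBne : B.Nonempty := hQne.mono (subset_convexHull ℝ _)
    have hBconv : Convex ℝ B := convex_convexHull ℝ _
    obtain ⟨u₀, hu₀B, hmin⟩ := hBcpt.exists_isMinOn hBne continuous_norm.continuousOn
    have hu₀ne : u₀ ≠ 0 := fun h => h0B (h ▸ hu₀B)
    have hm0 : 0 < ‖u₀‖ := norm_pos_iff.2 hu₀ne
    have key : ∀ u ∈ B, ‖u₀‖ ^ 2 ≤ inner ℝ u₀ u := by
      intro u hu
      by_contra hlt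
      push_neg at hlt
      have hself : (inner ℝ u₀ u₀ : ℝ) = ‖u₀‖ ^ 2 := real_inner_self_eq_norm_sq u₀
      have hc : (inner ℝ u₀ (u - u₀) : ℝ) < 0 := by
        rw [inner_sub_right, hself]; linarith
      have hune : u - u₀ ≠ 0 := by
        intro h
        rw [h] at hc
        simp at hc
      have hn2pos : (0:ℝ) < ‖u - u₀‖ ^ 2 := pow_pos (norm_pos_iff.2 hune) 2
      set c : ℝ := inner ℝ u₀ (u - u₀) with hcdef
      set t : ℝ := min 1 (-c / ‖u - u₀‖ ^ 2) with ht
      have ht0 : 0 < t := lt_min one_pos (div_pos (neg_pos.2 hc) hn2pos)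
      have ht1 : t ≤ 1 := min_le_left _ _
      have hmem : u₀ + t • (u - u₀) ∈ B := by
        have heq : u₀ + t • (u - u₀) = (1 - t) • u₀ + t • u := by
          rw [smul_sub, sub_smul, one_smul]; abel
        rw [heq]
        exact hBconv hu₀B hu (by linarith) ht0.le (by ring)
      have hnormle : ‖u₀‖ ≤ ‖u₀ + t • (u - u₀)‖ := hmin hmem
      have hsqle : ‖u₀‖ ^ 2 ≤ ‖u₀ + t • (u - u₀)‖ ^ 2 := by
        nlinarith [norm_nonneg (u₀ + t • (u - u₀))]
      have hexp : ‖u₀ + t • (u - u₀)‖ ^ 2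
          = ‖u₀‖ ^ 2 + 2 * (t * c) + t ^ 2 * ‖u - u₀‖ ^ 2 := by
        rw [norm_add_sq_real, real_inner_smul_right, norm_smul, Real.norm_eq_abs,
          mul_pow, sq_abs, ← hcdef]
      have h1 : 0 ≤ 2 * c + t * ‖u - u₀‖ ^ 2 := by nlinarith
      have h2 : t * ‖u - u₀‖ ^ 2 ≤ -c := by
        calc t * ‖u - u₀‖ ^ 2 ≤ (-c / ‖u - u₀‖ ^ 2) * ‖u - u₀‖ ^ 2 :=
              mul_le_mul_of_nonneg_right (min_le_right _ _) hn2pos.le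
        _ = -c := by field_simp
      linarith
    refine ⟨-u₀, ‖u₀‖ ^ 2, pow_pos hm0 2, ?_⟩
    intro ζ hζ
    have hζB : ζ ∈ B := subset_convexHull ℝ _ (subset_closure hζ)
    have := key ζ hζB
    have hcomm : (inner ℝ ζ (-u₀) : ℝ) = -(inner ℝ u₀ ζ) := by
      rw [inner_neg_right, real_inner_comm]
    rw [hcomm]
    linarith

end ConesOfComplementProof3

section ConesOfComplementProof4

variable {d : ℕ}

lemma cp_uniform_prox {A : Set (Euc d)} {x v : Euc d} {δ : ℝ} (hδ : 0 < δ)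
    (hmar : ∀ ζ ∈ limProxDirs A x, inner ℝ ζ v ≤ -δ) :
    ∃ ρ : ℝ, 0 < ρ ∧ ∀ y ∈ A, dist y x ≤ ρ → ∀ w : Euc d, w ≠ 0 → ‖w‖ ≤ ρ →
      infDist (y + w) A = ‖w‖ → inner ℝ ((‖w‖)⁻¹ • w) v ≤ -(δ / 2) := by
  by_contra hcon
  push_neg at hcon
  have hseq : ∀ n : ℕ, ∃ y ∈ A, dist y x ≤ 1 / ((n : ℝ) + 1) ∧ ∃ w : Euc d, w ≠ 0 ∧
      ‖w‖ ≤ 1 / ((n : ℝ) + 1) ∧ infDist (y + w) A = ‖w‖ ∧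
      -(δ / 2) < inner ℝ ((‖w‖)⁻¹ • w) v := by
    intro n
    exact hcon (1 / ((n : ℝ) + 1)) (by positivity)
  choose yy hyA hyd ww hw0 hwn hwreal hwip using hseq
  set dir : ℕ → Euc d := fun n => (‖ww n‖)⁻¹ • ww n with hdir
  have hdirS : ∀ n, dir n ∈ sphere (0 : Euc d) 1 := fun n =>
    mem_sphere_zero_iff_norm.2 (norm_smul_inv_norm (hw0 n))
  obtain ⟨ζ, hζcl, φ, hφ, hdirlim⟩ :=
    tendsto_subseq_of_bounded (isCompact_sphere (0 : Euc d) 1).isBounded hdirS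
  rw [IsClosed.closure_eq isClosed_sphere] at hζcl
  have hbd : ∀ k : ℕ, 1 / ((φ k : ℝ) + 1) ≤ 1 / ((k : ℝ) + 1) := by
    intro k
    have h1 : (k : ℝ) + 1 ≤ (φ k : ℝ) + 1 := by
      have h0 : k ≤ φ k := hφ.le_apply
      exact_mod_cast Nat.succ_le_succ h0
    exact one_div_le_one_div_of_le (by positivity) h1
  have hytend : Tendsto (fun k => yy (φ k)) atTop (𝓝 x) := by
    rw [tendsto_iff_dist_tendsto_zero]
    exact squeeze_zero (fun k => dist_nonneg)
      (fun k => le_trans (hyd (φ k)) (hbd k)) tendsto_one_div_add_atTop_nhds_zero_nat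
  have hwtend : Tendsto (fun k => ww (φ k)) atTop (𝓝 (0 : Euc d)) := by
    rw [tendsto_iff_dist_tendsto_zero]
    refine squeeze_zero (fun k => dist_nonneg) (fun k => ?_)
      tendsto_one_div_add_atTop_nhds_zero_nat
    rw [dist_zero_right]
    exact le_trans (hwn (φ k)) (hbd k)
  have hζmem : ζ ∈ limProxDirs A x := by
    refine ⟨mem_sphere_zero_iff_norm.1 hζcl, fun k => yy (φ k), fun k => ww (φ k),
      fun k => hyA _, hytend, fun k => hw0 _, hwtend, fun k => hwreal _, hdirlim⟩
  have h1 : inner ℝ ζ v ≤ -δ := hmar ζ hζmem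
  have h2 : -(δ / 2) ≤ inner ℝ ζ v := by
    have hl : Tendsto (fun k => (inner ℝ (dir (φ k)) v : ℝ)) atTop (𝓝 (inner ℝ ζ v)) :=
      hdirlim.inner tendsto_const_nhds
    exact ge_of_tendsto hl (Eventually.of_forall fun k => (hwip (φ k)).le)
  linarith

lemma cp_hypertangent {A : Set (Euc d)} (hA : IsClosed A) {x v : Euc d} {δ : ℝ} (hδ : 0 < δ)
    (hmar : ∀ ζ ∈ limProxDirs A x, inner ℝ ζ v ≤ -δ) :
    ∃ ε : ℝ, 0 < ε ∧ ∀ y ∈ A, dist y x < ε → ∀ w : Euc d, dist w v < ε →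
      ∀ t : ℝ, 0 < t → t ≤ ε → y + t • w ∈ A := by
  obtain ⟨ρ, hρ0, huni⟩ := cp_uniform_prox hδ hmar
  set M : ℝ := ‖v‖ + 1 with hM
  have hM1 : 1 ≤ M := by have := norm_nonneg v; linarith
  have hM0 : 0 < M := lt_of_lt_of_le one_pos hM1
  set ε : ℝ := min (ρ / (3 * M)) (min 1 (δ / 4)) with hε
  have hε0 : 0 < ε := by
    apply lt_min (by positivity) (lt_min one_pos (by positivity))
  have hε1 : ε ≤ 1 := (min_le_right _ _).trans (min_le_left _ _)
  have hεδ : ε ≤ δ / 4 := (min_le_right _ _).trans (min_le_right _ _)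
  have he3M : ε * (3 * M) ≤ ρ := by
    have h1 : ε ≤ ρ / (3 * M) := min_le_left _ _
    calc ε * (3 * M) ≤ (ρ / (3 * M)) * (3 * M) :=
          mul_le_mul_of_nonneg_right h1 (by positivity)
    _ = ρ := by field_simp
  refine ⟨ε, hε0, ?_⟩
  intro y hyA hyx w hwv t ht0 htε
  have hwM : ‖w‖ ≤ M := by
    have h1 : ‖w‖ ≤ ‖v‖ + ‖w - v‖ := by
      have := norm_add_le v (w - v)
      simpa using this
    have h2 : ‖w - v‖ < ε := by rwa [← dist_eq_norm]
    linarith [hε1]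
  by_contra hnot
  set g : ℝ → ℝ := fun s => infDist (y + s • w) A with hg
  have hgcont : Continuous g := by
    have h1 : Continuous fun s : ℝ => y + s • w := by fun_prop
    exact (continuous_infDist_pt A).comp h1
  have hAne : A.Nonempty := ⟨y, hyA⟩
  have hgt : 0 < g t := by
    rcases eq_or_lt_of_le (infDist_nonneg : 0 ≤ g t) with h | h
    · exact absurd ((hA.mem_iff_infDist_zero hAne).2 h.symm) hnot
    · exact h
  set T : Set ℝ := Icc 0 t ∩ {s | g s = 0} with hT
  have hT0 : (0 : ℝ) ∈ T := by
    constructor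
    · exact ⟨le_rfl, ht0.le⟩
    · show g 0 = 0
      simp only [hg, zero_smul, add_zero]
      exact infDist_zero_of_mem hyA
  have hTcpt : IsCompact T :=
    isCompact_Icc.inter_right (isClosed_eq hgcont continuous_const)
  set a : ℝ := sSup T with ha
  have haT : a ∈ T := hTcpt.sSup_mem ⟨0, hT0⟩
  have ha0 : 0 ≤ a := haT.1.1
  have hat : a ≤ t := haT.1.2
  have hga : g a = 0 := haT.2
  have hant : a < t := by
    rcases eq_or_lt_of_le hat with h | h
    · rw [h] at hga; rw [hga] at hgt; exact absurd hgt (lt_irrefl 0)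
    · exact h
  have hposg : ∀ s : ℝ, a < s → s ≤ t → 0 < g s := by
    intro s h1 h2
    rcases eq_or_lt_of_le (infDist_nonneg : 0 ≤ g s) with h | h
    · exfalso
      have hsT : s ∈ T := ⟨⟨ha0.trans h1.le, h2⟩, h.symm⟩
      exact absurd (le_csSup hTcpt.bddAbove hsT) (not_le.2 h1)
    · exact h
  have hkey : ∀ s : ℝ, a < s → s < t → ∀ r : ℝ, -(δ / 8) < r →
      ∃ᶠ z in 𝓝[>] s, slope g s z < r := by
    intro s hs1 hs2 r hr
    have hs0 : 0 < s := lt_of_le_of_lt ha0 hs1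
    have hsε : s ≤ ε := hs2.le.trans htε
    have hgs : 0 < g s := hposg s hs1 hs2.le
    obtain ⟨p, hpA, hpd⟩ := hA.exists_infDist_eq_dist hAne (y + s • w)
    set q : Euc d := (y + s • w) - p with hq
    have hqn : ‖q‖ = g s := by
      rw [hq, ← dist_eq_norm]
      exact hpd.symm
    have hq0 : q ≠ 0 := by
      intro h
      rw [h, norm_zero] at hqn
      exact hgs.ne hqn
    have hqpos : 0 < ‖q‖ := by rw [hqn]; exact hgs
    have hreal : infDist (p + q) A = ‖q‖ := by
      have hpq : p + q = y + s • w := by rw [hq]; abel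
      rw [hpq, hqn]
    have hgsle : g s ≤ s * ‖w‖ := by
      have h1 : infDist (y + s • w) A ≤ dist (y + s • w) y := infDist_le_dist_of_mem hyA
      have h2 : dist (y + s • w) y = s * ‖w‖ := by
        rw [dist_eq_norm, add_sub_cancel_left, norm_smul, Real.norm_of_nonneg hs0.le]
      rw [← h2]; exact h1
    have hswM : s * ‖w‖ ≤ ε * M :=
      mul_le_mul hsε hwM (norm_nonneg w) hε0.le
    have hεM : ε ≤ ε * M := le_mul_of_one_le_right hε0.le hM1
    have hqρ : ‖q‖ ≤ ρ := by
      rw [hqn]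
      calc g s ≤ s * ‖w‖ := hgsle
      _ ≤ ε * M := hswM
      _ ≤ ε * (3 * M) := by nlinarith [hε0.le, hM0.le]
      _ ≤ ρ := he3M
    have hpx : dist p x ≤ ρ := by
      have h1 : dist p x ≤ dist p (y + s • w) + dist (y + s • w) y + dist y x :=
        dist_triangle4 p (y + s • w) y x
      have h2 : dist p (y + s • w) = g s := by rw [dist_comm]; exact hpd.symm
      have h3 : dist (y + s • w) y = s * ‖w‖ := by
        rw [dist_eq_norm, add_sub_cancel_left, norm_smul, Real.norm_of_nonneg hs0.le]
      rw [h2, h3] at h1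
      have : g s + s * ‖w‖ + dist y x ≤ ε * M + ε * M + ε * M := by
        have := hgsle.trans hswM
        have := hyx.le.trans hεM
        linarith
      calc dist p x ≤ ε * M + ε * M + ε * M := h1.trans this
      _ = ε * (3 * M) := by ring
      _ ≤ ρ := he3M
    have hip := huni p hpA hpx q hq0 hqρ hreal
    have hipq : (inner ℝ q v : ℝ) ≤ -(δ / 2) * ‖q‖ := by
      have h5 : ‖q‖ * ((‖q‖)⁻¹ * inner ℝ q v) ≤ ‖q‖ * (-(δ / 2)) := by
        apply mul_le_mul_of_nonneg_left ?_ (norm_nonneg q)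
        rw [← real_inner_smul_left]
        exact hip
      rw [← mul_assoc, mul_inv_cancel₀ hqpos.ne', one_mul] at h5
      linarith [h5]
    have hwvδ : ‖w - v‖ ≤ δ / 4 := by
      have : dist w v < ε := hwv
      rw [dist_eq_norm] at this
      linarith [hεδ]
    have hipw : (inner ℝ q w : ℝ) ≤ -(δ / 4) * ‖q‖ := by
      have h1 : (inner ℝ q w : ℝ) = inner ℝ q v + inner ℝ q (w - v) := by
        rw [← inner_add_right]
        congr 1
        abel
      have h2 : (inner ℝ q (w - v) : ℝ) ≤ ‖q‖ * ‖w - v‖ := real_inner_le_norm q (w - v)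
      have h3 : ‖q‖ * ‖w - v‖ ≤ ‖q‖ * (δ / 4) :=
        mul_le_mul_of_nonneg_left hwvδ (norm_nonneg q)
      linarith
    set F : ℝ → ℝ := fun z => (2 * inner ℝ q w + (z - s) * ‖w‖ ^ 2) / (‖q + (z - s) • w‖ + ‖q‖)
      with hF
    have hFcont : ContinuousAt F s := by
      apply ContinuousAt.div
      · fun_prop
      · fun_prop
      · simp only [sub_self, zero_smul, add_zero]
        positivity
    have hFval : F s = inner ℝ q w / ‖q‖ := by
      simp only [hF, sub_self, zero_smul, add_zero, zero_mul]
      rw [show ‖q‖ + ‖q‖ = 2 * ‖q‖ by ring]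
      rw [mul_div_mul_left _ _ (two_ne_zero)]
    have hFtend : Tendsto F (𝓝[>] s) (𝓝 (inner ℝ q w / ‖q‖)) := by
      rw [← hFval]
      exact hFcont.tendsto.mono_left nhdsWithin_le_nhds
    have hval : (inner ℝ q w : ℝ) / ‖q‖ < r := by
      have h1 : (inner ℝ q w : ℝ) / ‖q‖ ≤ -(δ / 4) := by
        rw [div_le_iff₀ hqpos]
        linarith [hipw]
      have h2 : -(δ / 4) < r := by linarith
      linarith
    have hev : ∀ᶠ z in 𝓝[>] s, F z < r := hFtend.eventually_lt_const hval
    have hev2 : ∀ᶠ z in 𝓝[>] s, slope g s z < r := by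
      filter_upwards [hev, self_mem_nhdsWithin] with z hz1 hz2
      have hzs : s < z := hz2
      have hzspos : 0 < z - s := sub_pos.2 hzs
      have hgz : g z ≤ ‖q + (z - s) • w‖ := by
        have h1 : infDist (y + z • w) A ≤ dist (y + z • w) p := infDist_le_dist_of_mem hpA
        have h2 : y + z • w - p = q + (z - s) • w := by
          rw [hq, sub_smul]; abel
        rw [dist_eq_norm, h2] at h1
        exact h1
      have hden : 0 < ‖q + (z - s) • w‖ + ‖q‖ := by positivity
      have hiden : (‖q + (z - s) • w‖ - ‖q‖) / (z - s) = F z := by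
        rw [hF]
        dsimp only
        rw [div_eq_div_iff hzspos.ne' hden.ne']
        have hsq : ‖q + (z - s) • w‖ ^ 2
            = ‖q‖ ^ 2 + 2 * ((z - s) * inner ℝ q w) + (z - s) ^ 2 * ‖w‖ ^ 2 := by
          rw [norm_add_sq_real, real_inner_smul_right, norm_smul, Real.norm_eq_abs,
            mul_pow, sq_abs]
        have hexpand : (‖q + (z - s) • w‖ - ‖q‖) * (‖q + (z - s) • w‖ + ‖q‖)
            = ‖q + (z - s) • w‖ ^ 2 - ‖q‖ ^ 2 := by ring
        rw [hexpand, hsq]; ring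
      have hslope : slope g s z ≤ F z := by
        rw [slope_def_field, ← hiden, ← hqn]
        gcongr
      exact lt_of_le_of_lt hslope hz1
    exact hev2.frequently
  have hfence : ∀ a' : ℝ, a < a' → a' < t → g t ≤ g a' := by
    intro a' h1 h2
    have happ := image_le_of_liminf_slope_right_lt_deriv_boundary'
      (f := g) (f' := fun _ => -(δ / 8)) (a := a') (b := t)
      (hgcont.continuousOn)
      (fun s hs r hr => hkey s (lt_of_lt_of_le h1 hs.1) hs.2 r hr)
      (B := fun _ => g a') (B' := fun _ => 0)
      le_rfl
      continuousOn_const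
      (fun s _ => hasDerivWithinAt_const s _ (g a'))
      (fun s _ _ => by linarith)
    exact happ ⟨h2.le, le_rfl⟩
  have hlim : Tendsto g (𝓝[>] a) (𝓝 (g a)) :=
    (hgcont.continuousAt.tendsto).mono_left nhdsWithin_le_nhds
  have hfinal : g t ≤ g a := by
    apply ge_of_tendsto hlim
    filter_upwards [Ioo_mem_nhdsGT_of_mem (Set.mem_Ico.2 ⟨le_rfl, hant⟩)] with a' ha'
    exact hfence a' ha'.1 ha'.2
  rw [hga] at hfinal
  exact absurd hfinal (not_le.2 hgt)

end ConesOfComplementProof4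

section ConesOfComplementProof5

variable {d : ℕ}

lemma cp_flip {A : Set (Euc d)} {x v : Euc d} {ε : ℝ} (hε : 0 < ε)
    (h : ∀ y ∈ A, dist y x < ε → ∀ w : Euc d, dist w v < ε →
      ∀ t : ℝ, 0 < t → t ≤ ε → y + t • w ∈ A) :
    ∃ ε' : ℝ, 0 < ε' ∧ ∀ y ∈ closure Aᶜ, dist y x < ε' → ∀ w : Euc d, dist w (-v) < ε' →
      ∀ t : ℝ, 0 < t → t ≤ ε' → y + t • w ∈ closure Aᶜ := by
  set ε' : ℝ := min 1 (ε / (3 + ‖v‖)) with hε'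
  have hden : (0:ℝ) < 3 + ‖v‖ := by positivity
  have hε'0 : 0 < ε' := lt_min one_pos (by positivity)
  have hε'1 : ε' ≤ 1 := min_le_left _ _
  have hε'le : ε' ≤ ε / (3 + ‖v‖) := min_le_right _ _
  have hε'lt : ε' < ε := by
    have h1 : ε / (3 + ‖v‖) < ε := by
      rw [div_lt_iff₀ hden]
      nlinarith [norm_nonneg v]
    exact lt_of_le_of_lt hε'le h1
  have hkey : ε' * (1 + ‖v‖ + ε') ≤ ε := by
    have h1 : ε' * (1 + ‖v‖ + ε') ≤ ε' * (2 + ‖v‖) := by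
      apply mul_le_mul_of_nonneg_left ?_ hε'0.le
      linarith
    have h2 : ε' * (2 + ‖v‖) ≤ (ε / (3 + ‖v‖)) * (2 + ‖v‖) :=
      mul_le_mul_of_nonneg_right hε'le (by positivity)
    have h3 : (ε / (3 + ‖v‖)) * (2 + ‖v‖) ≤ ε := by
      rw [div_mul_eq_mul_div, div_le_iff₀ hden]
      nlinarith [norm_nonneg v]
    linarith
  refine ⟨ε', hε'0, ?_⟩
  intro y hyA' hyx w hwv t ht0 htε'
  by_contra hz
  rw [closure_compl] at hz hyA'
  simp only [Set.mem_compl_iff, not_not] at hz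
  apply hyA'
  have hznorm : ‖w‖ ≤ ‖v‖ + ε' := by
    have h1 : ‖w‖ ≤ ‖-v‖ + ‖w - -v‖ := by
      have := norm_add_le (-v) (w - -v)
      simpa using this
    rw [norm_neg] at h1
    have h2 : ‖w - -v‖ < ε' := by rwa [← dist_eq_norm]
    linarith
  have hzdist : dist (y + t • w) x < ε := by
    have h1 : dist (y + t • w) x ≤ dist (y + t • w) y + dist y x := dist_triangle _ _ _
    have h2 : dist (y + t • w) y = t * ‖w‖ := by
      rw [dist_eq_norm, add_sub_cancel_left, norm_smul, Real.norm_of_nonneg ht0.le]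
    have h3 : t * ‖w‖ ≤ ε' * (‖v‖ + ε') :=
      mul_le_mul htε' hznorm (norm_nonneg w) hε'0.le
    have h4 : ε' * (‖v‖ + ε') + ε' = ε' * (1 + ‖v‖ + ε') := by ring
    calc dist (y + t • w) x ≤ dist (y + t • w) y + dist y x := h1
    _ < ε' * (‖v‖ + ε') + ε' := by rw [h2]; linarith
    _ = ε' * (1 + ‖v‖ + ε') := h4
    _ ≤ ε := hkey
  have hball : ball y (t * (ε - ε')) ⊆ A := by
    intro y' hy'
    rw [mem_ball, dist_eq_norm] at hy'
    have hwd : dist (t⁻¹ • (y' - (y + t • w))) v < ε := by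
      rw [dist_eq_norm]
      have heq2 : t⁻¹ • (y' - (y + t • w)) - v = t⁻¹ • (y' - y) - (w + v) := by
        have h5 : y' - (y + t • w) = (y' - y) - t • w := by abel
        rw [h5, smul_sub, inv_smul_smul₀ ht0.ne']
        abel
      rw [heq2]
      have h6 : ‖t⁻¹ • (y' - y) - (w + v)‖ ≤ ‖t⁻¹ • (y' - y)‖ + ‖w + v‖ := norm_sub_le _ _
      have h7 : ‖t⁻¹ • (y' - y)‖ = t⁻¹ * ‖y' - y‖ := by
        rw [norm_smul, Real.norm_of_nonneg (inv_nonneg.2 ht0.le)]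
      have h8 : ‖w + v‖ < ε' := by
        have h9 : dist w (-v) = ‖w + v‖ := by rw [dist_eq_norm, sub_neg_eq_add]
        rwa [h9] at hwv
      have h10 : t⁻¹ * ‖y' - y‖ < t⁻¹ * (t * (ε - ε')) :=
        mul_lt_mul_of_pos_left hy' (inv_pos.2 ht0)
      have h11 : t⁻¹ * (t * (ε - ε')) = ε - ε' := by field_simp
      rw [h7] at h6
      linarith
    have hmain := h (y + t • w) (interior_subset hz) hzdist
      (t⁻¹ • (y' - (y + t • w))) hwd t ht0 (htε'.trans hε'lt.le)
    have heq : y + t • w + t • (t⁻¹ • (y' - (y + t • w))) = y' := by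
      rw [smul_inv_smul₀ ht0.ne']
      abel
    rwa [heq] at hmain
  exact mem_interior.2 ⟨ball y (t * (ε - ε')), hball, isOpen_ball,
    mem_ball_self (mul_pos ht0 (sub_pos.2 hε'lt))⟩

lemma cp_hyper_to_pol {A : Set (Euc d)} {x u : Euc d} {ε : ℝ} (hε : 0 < ε)
    (h : ∀ y ∈ A, dist y x < ε → ∀ w : Euc d, dist w u < ε →
      ∀ t : ℝ, 0 < t → t ≤ ε → y + t • w ∈ A) :
    ∀ ζ ∈ limProxDirs A x, inner ℝ ζ u ≤ (0 : ℝ) := by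
  rintro ζ ⟨hζn, y, w, hyA, hyx, hw0, hwlim, hwreal, hdirlim⟩
  have hev : ∀ᶠ n in atTop, dist (y n) x < ε := by
    have := Metric.tendsto_nhds.mp hyx ε hε
    exact this
  have hn : ∀ᶠ n in atTop, (inner ℝ ((‖w n‖)⁻¹ • w n) u : ℝ) ≤ 0 := by
    filter_upwards [hev] with n hyn
    have key : (inner ℝ (w n) u : ℝ) ≤ 0 := by
      by_contra hc
      push_neg at hc
      have hu0 : u ≠ 0 := by
        intro h'
        rw [h'] at hc
        simp at hc
      have hu2 : (0:ℝ) < ‖u‖ ^ 2 := pow_pos (norm_pos_iff.2 hu0) 2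
      set t : ℝ := min (ε / 2) (inner ℝ (w n) u / ‖u‖ ^ 2) with htd
      have ht0 : 0 < t := lt_min (by positivity) (div_pos hc hu2)
      have htε : t ≤ ε := (min_le_left _ _).trans (by linarith)
      have hmem := h (y n) (hyA n) hyn u (by simpa using hε) t ht0 htε
      have hle : ‖w n‖ ≤ ‖w n - t • u‖ := by
        have h1 : infDist (y n + w n) A ≤ dist (y n + w n) (y n + t • u) :=
          infDist_le_dist_of_mem hmem
        rw [hwreal n] at h1
        have h2 : y n + w n - (y n + t • u) = w n - t • u := by abel
        rw [dist_eq_norm, h2] at h1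
        exact h1
      have hsq : ‖w n‖ ^ 2 ≤ ‖w n - t • u‖ ^ 2 := pow_le_pow_left₀ (norm_nonneg _) hle 2
      have hexp : ‖w n - t • u‖ ^ 2
          = ‖w n‖ ^ 2 - 2 * (t * inner ℝ (w n) u) + t ^ 2 * ‖u‖ ^ 2 := by
        rw [norm_sub_sq_real, real_inner_smul_right, norm_smul, Real.norm_eq_abs,
          mul_pow, sq_abs]
      have h2' : 2 * (inner ℝ (w n) u : ℝ) ≤ t * ‖u‖ ^ 2 := by nlinarith
      have h3' : t * ‖u‖ ^ 2 ≤ inner ℝ (w n) u := by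
        calc t * ‖u‖ ^ 2 ≤ (inner ℝ (w n) u / ‖u‖ ^ 2) * ‖u‖ ^ 2 :=
              mul_le_mul_of_nonneg_right (min_le_right _ _) hu2.le
        _ = inner ℝ (w n) u := by field_simp
      linarith
    have hscale : (inner ℝ ((‖w n‖)⁻¹ • w n) u : ℝ) = (‖w n‖)⁻¹ * inner ℝ (w n) u :=
      real_inner_smul_left _ _ _
    rw [hscale]
    exact mul_nonpos_of_nonneg_of_nonpos (inv_nonneg.2 (norm_nonneg _)) key
  exact le_of_tendsto (hdirlim.inner tendsto_const_nhds) hn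

lemma cp_dagger {S : Set (Euc d)} (hS : IsClosed S) {x : Euc d}
    (hmar : ∃ v : Euc d, ∃ δ : ℝ, 0 < δ ∧ ∀ ζ ∈ limProxDirs S x, inner ℝ ζ v ≤ -δ) :
    cpPol (limProxDirs S x) ⊆ -(cpPol (limProxDirs (closure Sᶜ) x)) := by
  obtain ⟨v₀, δ₀, hδ₀, hv₀⟩ := hmar
  have hstep : ∀ (v : Euc d) (δ : ℝ), 0 < δ → (∀ ζ ∈ limProxDirs S x, inner ℝ ζ v ≤ -δ) →
      v ∈ -(cpPol (limProxDirs (closure Sᶜ) x)) := by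
    intro v δ hδ hv
    obtain ⟨ε, hε, hhyp⟩ := cp_hypertangent hS hδ hv
    obtain ⟨ε', hε', hflip⟩ := cp_flip hε hhyp
    have hpol := cp_hyper_to_pol hε' hflip
    rw [Set.mem_neg]
    exact fun ζ hζ => hpol ζ hζ
  intro uu huu
  have hclosed : IsClosed (-(cpPol (limProxDirs (closure Sᶜ) x))) :=
    (cpPol_isClosed _).neg
  have hseq : Tendsto (fun n : ℕ => uu + (1 / ((n : ℝ) + 1)) • v₀) atTop (𝓝 uu) := by
    have h1 : Tendsto (fun n : ℕ => (1 / ((n : ℝ) + 1))) atTop (𝓝 0) :=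
      tendsto_one_div_add_atTop_nhds_zero_nat
    have h2 : Tendsto (fun n : ℕ => (1 / ((n : ℝ) + 1)) • v₀) atTop (𝓝 ((0:ℝ) • v₀)) :=
      h1.smul_const v₀
    rw [zero_smul] at h2
    simpa using tendsto_const_nhds.add h2
  apply hclosed.mem_of_tendsto hseq
  filter_upwards with n
  apply hstep _ ((1 / ((n : ℝ) + 1)) * δ₀) (by positivity)
  intro ζ hζ
  rw [inner_add_right, real_inner_smul_right]
  have h1 := huu ζ hζ
  have h2 := hv₀ ζ hζ
  have h3 : (1 / ((n : ℝ) + 1)) * inner ℝ ζ v₀ ≤ (1 / ((n : ℝ) + 1)) * (-δ₀) :=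
    mul_le_mul_of_nonneg_left h2 (by positivity)
  linarith

lemma cp_closure_interior_eq {S : Set (Euc d)} (hS : IsClosed S)
    (hw : ∀ z ∈ frontier S, WedgedAt S z) : closure (interior S) = S := by
  apply subset_antisymm (closure_minimal interior_subset hS)
  intro z hz
  by_cases hzi : z ∈ interior S
  · exact subset_closure hzi
  · have hzf : z ∈ frontier S := ⟨subset_closure hz, hzi⟩
    have hpointed := wedged_pointed (hw z hzf)
    obtain ⟨v₀, δ₀, hδ₀, hv₀⟩ := exists_margin (zero_not_mem_B hpointed)
    obtain ⟨ε, hε, hhyp⟩ := cp_hypertangent hS hδ₀ hv₀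
    have hmem : ∀ t : ℝ, 0 < t → t ≤ ε → z + t • v₀ ∈ interior S := by
      intro t ht0 htε
      apply mem_interior.2 ⟨ball (z + t • v₀) (t * ε), ?_, isOpen_ball,
        mem_ball_self (mul_pos ht0 hε)⟩
      intro y' hy'
      rw [mem_ball, dist_eq_norm] at hy'
      have hwd : dist (v₀ + t⁻¹ • (y' - (z + t • v₀))) v₀ < ε := by
        rw [dist_eq_norm]
        have heq : v₀ + t⁻¹ • (y' - (z + t • v₀)) - v₀ = t⁻¹ • (y' - (z + t • v₀)) := by abel
        rw [heq, norm_smul, Real.norm_of_nonneg (inv_nonneg.2 ht0.le)]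
        have h1 : t⁻¹ * ‖y' - (z + t • v₀)‖ < t⁻¹ * (t * ε) :=
          mul_lt_mul_of_pos_left hy' (inv_pos.2 ht0)
        have h2 : t⁻¹ * (t * ε) = ε := by field_simp
        linarith
      have key := hhyp z hz (by simpa using hε) _ hwd t ht0 htε
      have heq2 : z + t • (v₀ + t⁻¹ • (y' - (z + t • v₀))) = y' := by
        rw [smul_add, smul_inv_smul₀ ht0.ne']
        abel
      rwa [heq2] at key
    have htend : Tendsto (fun n : ℕ => z + (min ε (1 / ((n : ℝ) + 1))) • v₀) atTop (𝓝 z) := by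
      have h1 : Tendsto (fun n : ℕ => min ε (1 / ((n : ℝ) + 1))) atTop (𝓝 (min ε 0)) :=
        (tendsto_const_nhds).min tendsto_one_div_add_atTop_nhds_zero_nat
    
      rw [min_eq_right hε.le] at h1
      have h2 : Tendsto (fun n : ℕ => (min ε (1 / ((n : ℝ) + 1))) • v₀) atTop
          (𝓝 ((0:ℝ) • v₀)) := h1.smul_const v₀
      rw [zero_smul] at h2
      simpa using tendsto_const_nhds.add h2
    apply mem_closure_of_tendsto htend
    filter_upwards with n
    exact hmem _ (lt_min hε (by positivity)) (min_le_left _ _)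

end ConesOfComplementProof5
/-- **Relation (2.10) (cones of the complement).** For a closed set `S` wedged at every
boundary point and `x ∈ ∂S`, writing `S' = closure(ℝ^d ∖ S)`, one has
`N_S^C(x) = −N_{S'}^C(x)` and `T_S^C(x) = −T_{S'}^C(x)`. -/
theorem cones_of_complement {d : ℕ} (S : Set (Euc d)) (hS : IsClosed S)
    (hw : ∀ z ∈ frontier S, WedgedAt S z) (x : Euc d) (hx : x ∈ frontier S) :
    clarkeNormalCone S x = -(clarkeNormalCone (closure Sᶜ) x) ∧
    clarkeTangentCone S x = -(clarkeTangentCone (closure Sᶜ) x) := by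
  set S' : Set (Euc d) := closure Sᶜ with hS'def
  have hS'closed : IsClosed S' := isClosed_closure
  have hpointed : ∀ p ∈ clarkeNormalCone S x, -p ∈ clarkeNormalCone S x → p = 0 :=
    wedged_pointed (hw x hx)
  have h0B := zero_not_mem_B hpointed
  have hNclosed : IsClosed (clarkeNormalCone S x) := N_isClosed hpointed
  have hdag1 : cpPol (limProxDirs S x) ⊆ -(cpPol (limProxDirs S' x)) :=
    cp_dagger hS (exists_margin h0B)
  have hbipolar : cpPol (cpPol (limProxDirs S x)) = clarkeNormalCone S x :=
    subset_antisymm (polpol_subset_N hNclosed) (N_subset_polpol S x)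
  have hsub1 : cpPol (cpPol (limProxDirs S' x)) ⊆ -(clarkeNormalCone S x) := by
    have h1 : -(cpPol (cpPol (limProxDirs S' x))) ⊆ clarkeNormalCone S x := by
      rw [← hbipolar]
      have h2 := cpPol_anti hdag1
      rwa [cpPol_neg] at h2
    intro p hp
    rw [Set.mem_neg]
    apply h1
    rw [Set.mem_neg, neg_neg]
    exact hp
  have hpointed' : ∀ p ∈ clarkeNormalCone S' x, -p ∈ clarkeNormalCone S' x → p = 0 := by
    intro p h1 h2
    have e1 : p ∈ -(clarkeNormalCone S x) := hsub1 (N_subset_polpol S' x h1)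
    have e2 : -p ∈ -(clarkeNormalCone S x) := hsub1 (N_subset_polpol S' x h2)
    rw [Set.mem_neg] at e1 e2
    rw [neg_neg] at e2
    exact hpointed p e2 e1
  have hN'closed : IsClosed (clarkeNormalCone S' x) := N_isClosed hpointed'
  have hbipolar' : cpPol (cpPol (limProxDirs S' x)) = clarkeNormalCone S' x :=
    subset_antisymm (polpol_subset_N hN'closed) (N_subset_polpol S' x)
  have hS'' : closure S'ᶜ = S := by
    rw [hS'def, ← interior_compl, compl_compl]
    exact cp_closure_interior_eq hS hw
  have hdag2 : cpPol (limProxDirs S' x) ⊆ -(cpPol (limProxDirs S x)) := by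
    have h1 := cp_dagger hS'closed (exists_margin (zero_not_mem_B hpointed'))
    rwa [hS''] at h1
  have hpoleq : cpPol (limProxDirs S x) = -(cpPol (limProxDirs S' x)) := by
    apply subset_antisymm hdag1
    intro p hp
    rw [Set.mem_neg] at hp
    have h1 := hdag2 hp
    rw [Set.mem_neg, neg_neg] at h1
    exact h1
  constructor
  · calc clarkeNormalCone S x = cpPol (cpPol (limProxDirs S x)) := hbipolar.symm
    _ = cpPol (-(cpPol (limProxDirs S' x))) := by rw [hpoleq]
    _ = -(cpPol (cpPol (limProxDirs S' x))) := cpPol_neg _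
    _ = -(clarkeNormalCone S' x) := by rw [hbipolar']
  · calc clarkeTangentCone S x = cpPol (clarkeNormalCone S x) := tangent_eq_cpPol S x
    _ = cpPol (limProxDirs S x) := cpPol_N_eq S x
    _ = -(cpPol (limProxDirs S' x)) := hpoleq
    _ = -(cpPol (clarkeNormalCone S' x)) := by rw [cpPol_N_eq]
    _ = -(clarkeTangentCone S' x) := by rw [tangent_eq_cpPol]
end
end
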